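/- arXiv:1601.04429 — 14 statements merged into one kernel-verified Lean document; each statement's English description precedes it below -/
import Mathlib

section
/- Let {p_k} ⊂ (0,2] be a sequence of exponents, let x ∈ ℓ^{p_k}, and let {x^n} be a sequence of elements of ℓ^{p_k} (each x^n a real sequence with ∑_k |x^n_k|^{p_k} < ∞) such that x^n_k → x_k as n → ∞ for every fixed k, and ∑_k |x^n_k|^{p_k} → ∑_k |x_k|^{p_k} as n → ∞. Then ∑_k |x^n_k − x_k|^{p_k} → 0 as n → ∞ (the sums of the nonnegative series being taken in the extended reals [0,∞]). -/
open Filter Topology ENNReal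

/-- STATEMENT 1 (Kadec–Klee / Radon–Riesz property of `ℓ^{p_k}`, `p_k ∈ (0,2]`):
if `x ∈ ℓ^{p_k}`, each `x^n ∈ ℓ^{p_k}`, `x^n_k → x_k` componentwise and
`∑_k |x^n_k|^{p_k} → ∑_k |x_k|^{p_k}`, then `∑_k |x^n_k − x_k|^{p_k} → 0`
(the nonnegative series being summed in `[0,∞]`). -/
theorem stmt_1 (p : ℕ → ℝ) (hp0 : ∀ k, 0 < p k) (hp2 : ∀ k, p k ≤ 2)
    (x : ℕ → ℝ) (hx : Summable fun k => |x k| ^ p k)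
    (X : ℕ → ℕ → ℝ) (hX : ∀ n, Summable fun k => |X n k| ^ p k)
    (hcomp : ∀ k, Tendsto (fun n => X n k) atTop (𝓝 (x k)))
    (hnorm : Tendsto (fun n => ∑' k, |X n k| ^ p k) atTop (𝓝 (∑' k, |x k| ^ p k))) :
    Tendsto (fun n => ∑' k, ENNReal.ofReal (|X n k - x k| ^ p k)) atTop (𝓝 0) := by
  have habs : ∀ (a : ℝ) (k : ℕ), 0 ≤ |a| ^ p k := fun a k => Real.rpow_nonneg (abs_nonneg a) _
  -- key inequality
  have key : ∀ (a b : ℝ) (k : ℕ), |a - b| ^ p k ≤ 4 * (|a| ^ p k + |b| ^ p k) := by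
    intro a b k
    have hmax : (0:ℝ) ≤ max |a| |b| := le_trans (abs_nonneg a) (le_max_left _ _)
    have h1 : |a - b| ≤ 2 * max |a| |b| := by
      calc |a - b| ≤ |a| + |b| := abs_sub a b
        _ ≤ 2 * max |a| |b| := by
          rw [two_mul]; exact add_le_add (le_max_left _ _) (le_max_right _ _)
    have h2 : |a - b| ^ p k ≤ (2 * max |a| |b|) ^ p k :=
      Real.rpow_le_rpow (abs_nonneg _) h1 (hp0 k).le
    rw [Real.mul_rpow (by norm_num) hmax] at h2
    have h3 : (2:ℝ) ^ p k ≤ 4 := by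
      have := Real.rpow_le_rpow_of_exponent_le (by norm_num : (1:ℝ) ≤ 2) (hp2 k)
      rwa [show ((2:ℝ):ℝ) ^ (2:ℝ) = 4 by
        rw [show (2:ℝ) = ((2:ℕ):ℝ) from by norm_num, Real.rpow_natCast]; norm_num] at this
    have h4 : (max |a| |b|) ^ p k ≤ |a| ^ p k + |b| ^ p k := by
      rcases max_cases |a| |b| with ⟨h, _⟩ | ⟨h, _⟩ <;> rw [h]
      · exact le_add_of_nonneg_right (habs b k)
      · exact le_add_of_nonneg_left (habs a k)
    calc |a - b| ^ p k ≤ 2 ^ p k * (max |a| |b|) ^ p k := h2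
      _ ≤ 4 * (|a| ^ p k + |b| ^ p k) :=
        mul_le_mul h3 h4 (Real.rpow_nonneg hmax _) (by norm_num)
  -- summability
  have hsum4 : ∀ n, Summable (fun k => 4 * (|X n k| ^ p k + |x k| ^ p k)) :=
    fun n => ((hX n).add hx).mul_left 4
  have hCsum : ∀ n, Summable (fun k => |X n k - x k| ^ p k) := fun n =>
    Summable.of_nonneg_of_le (fun k => habs _ k) (fun k => key _ _ k) (hsum4 n)
  set r : ℕ → ℕ → ℝ := fun n k => 4 * (|X n k| ^ p k + |x k| ^ p k) - |X n k - x k| ^ p k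
    with hrdef
  have hr0 : ∀ n k, 0 ≤ r n k := fun n k => sub_nonneg.2 (key _ _ k)
  have hrsum : ∀ n, Summable (r n) := fun n => (hsum4 n).sub (hCsum n)
  set g : ℕ → ℕ → ℝ≥0∞ := fun n k => ENNReal.ofReal (r n k) with hgdef
  -- pointwise limits
  have hptC : ∀ k, Tendsto (fun n => |X n k - x k| ^ p k) atTop (𝓝 0) := by
    intro k
    have h1 : Tendsto (fun n => |X n k - x k|) atTop (𝓝 0) := by
      have := ((hcomp k).sub_const (x k)).abs
      simpa using this
    have hc : ContinuousAt (fun t : ℝ => t ^ p k) 0 :=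
      Real.continuousAt_rpow_const 0 (p k) (Or.inr (hp0 k).le)
    have := hc.tendsto.comp h1
    rw [Real.zero_rpow (hp0 k).ne'] at this; exact this
  have hptB : ∀ k, Tendsto (fun n => |X n k| ^ p k) atTop (𝓝 (|x k| ^ p k)) := by
    intro k
    have h1 : Tendsto (fun n => |X n k|) atTop (𝓝 |x k|) := (hcomp k).abs
    exact (Real.continuousAt_rpow_const _ (p k) (Or.inr (hp0 k).le)).tendsto.comp h1
  have hptr : ∀ k, Tendsto (fun n => r n k) atTop (𝓝 (8 * |x k| ^ p k)) := by
    intro k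
    have h := ((((hptB k).add_const (|x k| ^ p k)).const_mul 4).sub (hptC k))
    convert h using 2
    ring
  -- sums
  set sA : ℝ := ∑' k, |x k| ^ p k with hsA
  set sB : ℕ → ℝ := fun n => ∑' k, |X n k| ^ p k with hsB
  set sC : ℕ → ℝ := fun n => ∑' k, |X n k - x k| ^ p k with hsC
  set sR : ℕ → ℝ := fun n => ∑' k, r n k with hsR
  have hsum_eq : ∀ n, sR n + sC n = 4 * (sB n + sA) := by
    intro n
    rw [hsR, hsC, ← Summable.tsum_add (hrsum n) (hCsum n)]
    have : ∀ k, r n k + |X n k - x k| ^ p k = 4 * (|X n k| ^ p k + |x k| ^ p k) := by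
      intro k; rw [hrdef]; ring
    simp_rw [this]
    rw [tsum_mul_left, Summable.tsum_add (hX n) hx]
  -- ENNReal sums
  set T : ℕ → ℝ≥0∞ := fun n => ∑' k, ENNReal.ofReal (|X n k - x k| ^ p k) with hT
  set G : ℕ → ℝ≥0∞ := fun n => ∑' k, g n k with hG
  set S : ℕ → ℝ≥0∞ := fun n => ENNReal.ofReal (4 * (sB n + sA)) with hS
  set L : ℝ≥0∞ := ENNReal.ofReal (8 * sA) with hL
  have hTof : ∀ n, T n = ENNReal.ofReal (sC n) := fun n =>
    (ENNReal.ofReal_tsum_of_nonneg (fun k => habs _ k) (hCsum n)).symm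
  have hGof : ∀ n, G n = ENNReal.ofReal (sR n) := fun n =>
    (ENNReal.ofReal_tsum_of_nonneg (fun k => hr0 n k) (hrsum n)).symm
  have hsCnn : ∀ n, 0 ≤ sC n := fun n => tsum_nonneg (fun k => habs _ k)
  have hsRnn : ∀ n, 0 ≤ sR n := fun n => tsum_nonneg (hr0 n)
  have hGT : ∀ n, G n + T n = S n := by
    intro n
    rw [hGof, hTof, ← ENNReal.ofReal_add (hsRnn n) (hsCnn n), hsum_eq n, hS]
  have hGtop : ∀ n, G n ≠ ⊤ := fun n => by rw [hGof]; exact ENNReal.ofReal_ne_top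
  have hTS : ∀ n, T n = S n - G n := by
    intro n
    have := hGT n
    exact ENNReal.eq_sub_of_add_eq (hGtop n) (by rw [add_comm]; exact this)
  -- S tends to L
  have hStend : Tendsto S atTop (𝓝 L) := by
    have hreal : Tendsto (fun n => 4 * (sB n + sA)) atTop (𝓝 (8 * sA)) := by
      have := ((hnorm.add_const sA).const_mul 4)
      convert this using 2
      ring
    exact (ENNReal.continuous_ofReal.tendsto _).comp hreal
  -- Fatou
  have hfatou : L ≤ liminf G atTop := by
    have hmeas : ∀ n, Measurable (g n) := fun n => measurable_of_countable _
    have h1 : ∑' k, liminf (fun n => g n k) atTop ≤ liminf G atTop := by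
      simpa [MeasureTheory.lintegral_count] using
        MeasureTheory.lintegral_liminf_le (μ := MeasureTheory.Measure.count) hmeas
    refine le_trans ?_ h1
    have h2 : ∀ k, liminf (fun n => g n k) atTop = ENNReal.ofReal (8 * |x k| ^ p k) := by
      intro k
      exact ((ENNReal.continuous_ofReal.tendsto _).comp (hptr k)).liminf_eq
    calc L = ∑' k, ENNReal.ofReal (8 * |x k| ^ p k) := by
          rw [hL, hsA, ← tsum_mul_left,
            ENNReal.ofReal_tsum_of_nonneg (fun k => by positivity) (hx.mul_left 8)]
      _ ≤ ∑' k, liminf (fun n => g n k) atTop := by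
          exact le_of_eq (tsum_congr fun k => (h2 k).symm)
  have hLtop : L ≠ ⊤ := ENNReal.ofReal_ne_top
  -- conclusion
  rw [show (𝓝 (0:ℝ≥0∞)) = 𝓝 0 from rfl, ENNReal.tendsto_nhds_zero]
  intro ε hε
  rcases eq_or_ne ε ⊤ with hεtop | hεtop
  · filter_upwards with n; simp [hεtop]
  have hε2 : (0:ℝ≥0∞) < ε / 2 := ENNReal.div_pos hε.ne' (by norm_num)
  have hSev : ∀ᶠ n in atTop, S n < L + ε / 2 := by
    refine hStend.eventually_lt_const ?_
    exact ENNReal.lt_add_right hLtop hε2.ne'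
  have hGev : ∀ᶠ n in atTop, L - ε / 2 ≤ G n := by
    rcases eq_or_ne (L - ε / 2) 0 with h0 | h0
    · filter_upwards with n; simp [h0]
    · have hlt : L - ε / 2 < liminf G atTop := by
        refine lt_of_lt_of_le ?_ hfatou
        exact ENNReal.sub_lt_self hLtop (fun hL0 => h0 (by simp [hL0, zero_tsub])) hε2.ne'
      filter_upwards [eventually_lt_of_lt_liminf hlt] with n hn using hn.le
  filter_upwards [hSev, hGev] with n h1 h2
  rw [hTS n]
  calc S n - G n ≤ (L + ε / 2) - (L - ε / 2) := tsub_le_tsub h1.le h2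
    _ ≤ ε := by
      rw [tsub_le_iff_right]
      have hle : L ≤ ε / 2 + (L - ε / 2) := by
        rw [add_comm]; exact le_tsub_add
      calc L + ε / 2 = ε / 2 + L := add_comm _ _
        _ ≤ ε / 2 + (ε / 2 + (L - ε / 2)) := add_le_add_right hle _
        _ = ε + (L - ε / 2) := by rw [← add_assoc, ENNReal.add_halves]
end

section
/- Let {q_k} be a sequence of real numbers with 1 < q_k ≤ 2 for all k and q_k → 1 as k → ∞. Then ℓ^{q_k} ⊆ ⋂_{p>1} ℓ^p; that is, for every real sequence x = {x_k}, if ∑_k |x_k|^{q_k} < ∞ then for every real p > 1 the series ∑_k |x_k|^p converges. -/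
open Filter Topology

/-- if `1 < q k ≤ 2` for all `k` and `q k → 1`, then
`ℓ^{q_k} ⊆ ⋂_{p>1} ℓ^p`: summability of `∑ |x k| ^ q k` implies summability of
`∑ |x k| ^ p` for every real `p > 1`. -/
theorem stmt_2 (q : ℕ → ℝ) (hq1 : ∀ k, 1 < q k) (hq2 : ∀ k, q k ≤ 2)
    (hqlim : Tendsto q atTop (𝓝 1))
    (x : ℕ → ℝ) (hx : Summable fun k => |x k| ^ q k) :
    ∀ p : ℝ, 1 < p → Summable fun k => |x k| ^ p := by
  intro p hp
  have h0 : Tendsto (fun k => |x k| ^ q k) atTop (𝓝 0) := hx.tendsto_atTop_zero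
  have hq : ∀ᶠ k in atTop, q k ≤ p := hqlim.eventually_le_const hp
  have hsmall : ∀ᶠ k in atTop, |x k| ^ q k < 1 :=
    h0.eventually_lt_const one_pos
  have hbound : ∀ᶠ k in atTop, ‖|x k| ^ p‖ ≤ 1 * ‖|x k| ^ q k‖ := by
    filter_upwards [hq, hsmall] with k hqk hs
    have hxa : (0:ℝ) ≤ |x k| := abs_nonneg _
    have hx1 : |x k| ≤ 1 := by
      by_contra h
      push_neg at h
      exact absurd hs (not_lt.mpr (Real.one_le_rpow h.le (le_of_lt (lt_trans one_pos (hq1 k)))))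
    have : |x k| ^ p ≤ |x k| ^ q k :=
      Real.rpow_le_rpow_of_exponent_ge' hxa hx1 (le_of_lt (lt_trans one_pos (hq1 k))) hqk
    rw [one_mul, Real.norm_eq_abs, Real.norm_eq_abs,
      abs_of_nonneg (Real.rpow_nonneg hxa _), abs_of_nonneg (Real.rpow_nonneg hxa _)]
    exact this
  exact summable_of_isBigO_nat hx (Asymptotics.IsBigO.of_bound 1 hbound)
end

section
/- Let {q_k} be a sequence of real numbers with 1 < q_k ≤ 2 for all k ≥ 1 and q_k → 1 as k → ∞, and define the sequence x by x_k = k^{-1/q_k} for k ≥ 1. Then the series ∑_k |x_k|^{q_k} diverges (indeed each term equals 1/k), while for every real p > 1 the series ∑_k |x_k|^p converges. In particular the inclusion ℓ^{q_k} ⊆ ⋂_{p>1} ℓ^p is strict. -/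
open Filter Topology

/-- for `1 < q k ≤ 2` (`k ≥ 1`), `q k → 1`, and the sequence
`x k = k ^ (−1/q k)` for `k ≥ 1`, the series `∑ |x k| ^ q k` diverges (indeed each
term equals `1/k` for `k ≥ 1`), while `∑ |x k| ^ p` converges for every real `p > 1`.
In particular the inclusion `ℓ^{q_k} ⊆ ⋂_{p>1} ℓ^p` is strict. -/
theorem stmt_3 (q : ℕ → ℝ) (hq1 : ∀ k, 1 ≤ k → 1 < q k) (hq2 : ∀ k, 1 ≤ k → q k ≤ 2)
    (hqlim : Tendsto q atTop (𝓝 1))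
    (x : ℕ → ℝ) (hxdef : ∀ k : ℕ, 1 ≤ k → x k = (k : ℝ) ^ (-(1 / q k))) :
    (∀ k : ℕ, 1 ≤ k → |x k| ^ q k = 1 / (k : ℝ)) ∧
    ¬ (Summable fun k => |x k| ^ q k) ∧
    (∀ p : ℝ, 1 < p → Summable fun k => |x k| ^ p) := by
  have key : ∀ k : ℕ, 1 ≤ k → |x k| ^ q k = 1 / (k : ℝ) := by
    intro k hk
    have hk0 : (0:ℝ) ≤ (k:ℝ) := Nat.cast_nonneg k
    have hq0 : q k ≠ 0 := by have := hq1 k hk; linarith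
    rw [hxdef k hk, abs_of_nonneg (Real.rpow_nonneg hk0 _), ← Real.rpow_mul hk0]
    have : -(1 / q k) * q k = -1 := by field_simp
    rw [this, Real.rpow_neg_one, one_div]
  refine ⟨key, ?_, ?_⟩
  · intro hs
    have h1 : Summable (fun n : ℕ => |x (n + 1)| ^ q (n + 1)) :=
      (summable_nat_add_iff 1).mpr hs
    have h2 : Summable (fun n : ℕ => 1 / ((n + 1 : ℕ) : ℝ)) := by
      refine h1.congr fun n => key (n + 1) (by omega)
    exact Real.not_summable_one_div_natCast
      ((summable_nat_add_iff 1).mp h2)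
  · intro p hp
    set r := (1 + p) / 2 with hr
    have hr1 : 1 < r := by simp only [hr]; linarith
    have hrp : r < p := by simp only [hr]; linarith
    have hsum : Summable (fun k : ℕ => (k : ℝ) ^ (-r)) :=
      Real.summable_nat_rpow.mpr (by linarith)
    have hpr1 : (1:ℝ) < p / r := (one_lt_div (by linarith)).mpr hrp
    have hev : ∀ᶠ k in atTop, q k < p / r := hqlim.eventually_lt_const hpr1
    have hbound : ∀ᶠ k in atTop, ‖|x k| ^ p‖ ≤ (k : ℝ) ^ (-r) := by
      filter_upwards [hev, eventually_ge_atTop 1] with k hk hk1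
      have hk0 : (0:ℝ) ≤ (k:ℝ) := Nat.cast_nonneg k
      have hkk : (1:ℝ) ≤ (k:ℝ) := by exact_mod_cast hk1
      have hqpos : 0 < q k := by have := hq1 k hk1; linarith
      have hle : r ≤ p / q k := by
        rw [le_div_iff₀ hqpos]
        have : q k * r < p / r * r := by
          exact mul_lt_mul_of_pos_right hk (by linarith)
        rw [div_mul_cancel₀ p (by linarith : r ≠ 0)] at this
        linarith
      have h1 : |x k| ^ p = (k : ℝ) ^ (-(p / q k)) := by
        rw [hxdef k hk1, abs_of_nonneg (Real.rpow_nonneg hk0 _), ← Real.rpow_mul hk0]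
        ring_nf
      rw [h1, Real.norm_eq_abs, abs_of_nonneg (Real.rpow_nonneg hk0 _)]
      exact Real.rpow_le_rpow_of_exponent_le hkk (by linarith)
    exact Summable.of_norm_bounded_eventually hsum
      (by rwa [Nat.cofinite_eq_atTop])
end

section
/- Let {q_k} be a sequence of real numbers with 1 < q_k ≤ 2 for all k and q_k → 1 as k → ∞. Then the F-norm ‖x‖_{q_k} = ∑_k |x_k|^{q_k} is strictly convex on ℓ^{q_k}: for all x, y ∈ ℓ^{q_k} with x ≠ y and every t ∈ (0,1), one has ∑_k |t x_k + (1−t) y_k|^{q_k} < t ∑_k |x_k|^{q_k} + (1−t) ∑_k |y_k|^{q_k}. -/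
open Filter Topology

lemma abs_rpow_strict_convex {p a b t : ℝ} (hp : 1 < p) (hab : a ≠ b)
    (ht0 : 0 < t) (ht1 : t < 1) :
    |t * a + (1 - t) * b| ^ p < t * |a| ^ p + (1 - t) * |b| ^ p := by
  have ht0' : (0:ℝ) < 1 - t := by linarith
  by_cases h : |a| = |b|
  · -- then a = -b, b ≠ 0
    have hb : b ≠ 0 := by
      rintro rfl
      simp only [abs_zero, abs_eq_zero] at h
      exact hab (by simp [h])
    have ha : a = -b := by
      rcases abs_eq_abs.1 h with h1 | h1
      · exact absurd h1 hab
      · exact h1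
    have hlt : |t * a + (1 - t) * b| < |b| := by
      rw [ha]
      have : t * (-b) + (1 - t) * b = (1 - 2 * t) * b := by ring
      rw [this, abs_mul]
      have h1 : |1 - 2 * t| < 1 := by
        rw [abs_lt]; constructor <;> linarith
      have hb' : 0 < |b| := abs_pos.2 hb
      nlinarith
    calc |t * a + (1 - t) * b| ^ p < |b| ^ p :=
          Real.rpow_lt_rpow (abs_nonneg _) hlt (lt_trans one_pos hp)
      _ = t * |a| ^ p + (1 - t) * |b| ^ p := by rw [h]; ring
  · have h1 : |t * a + (1 - t) * b| ^ p ≤ (t * |a| + (1 - t) * |b|) ^ p := by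
      apply Real.rpow_le_rpow (abs_nonneg _)
      · calc |t * a + (1 - t) * b| ≤ |t * a| + |(1 - t) * b| := abs_add_le _ _
          _ = t * |a| + (1 - t) * |b| := by
            rw [abs_mul, abs_mul, abs_of_pos ht0, abs_of_pos ht0']
      · linarith
    have h2 := (strictConvexOn_rpow hp).2 (abs_nonneg a) (abs_nonneg b) h
      ht0 ht0' (by ring)
    simpa [smul_eq_mul] using lt_of_le_of_lt h1 h2

/-- for `1 < q k ≤ 2`, `q k → 1`, the F-norm `‖x‖_{q_k} = ∑_k |x_k|^{q_k}`
is strictly convex on `ℓ^{q_k}`: for `x ≠ y` in `ℓ^{q_k}` and `t ∈ (0,1)`,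
`∑_k |t x_k + (1−t) y_k|^{q_k} < t ∑_k |x_k|^{q_k} + (1−t) ∑_k |y_k|^{q_k}`. -/
theorem stmt_5 (q : ℕ → ℝ) (hq1 : ∀ k, 1 < q k) (hq2 : ∀ k, q k ≤ 2)
    (hqlim : Tendsto q atTop (𝓝 1))
    (x y : ℕ → ℝ) (hx : Summable fun k => |x k| ^ q k)
    (hy : Summable fun k => |y k| ^ q k) (hxy : x ≠ y)
    (t : ℝ) (ht0 : 0 < t) (ht1 : t < 1) :
    ∑' k, |t * x k + (1 - t) * y k| ^ q k <
      t * ∑' k, |x k| ^ q k + (1 - t) * ∑' k, |y k| ^ q k := by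
  obtain ⟨i, hi⟩ : ∃ i, x i ≠ y i := Function.ne_iff.1 hxy
  have hg : Summable fun k => t * |x k| ^ q k + (1 - t) * |y k| ^ q k :=
    ((hx.mul_left t).add (hy.mul_left (1 - t)))
  have hle : ∀ k, |t * x k + (1 - t) * y k| ^ q k ≤
      t * |x k| ^ q k + (1 - t) * |y k| ^ q k := by
    intro k
    by_cases h : x k = y k
    · have : t * x k + (1 - t) * y k = y k := by rw [h]; ring
      rw [this, h]; nlinarith [Real.rpow_nonneg (abs_nonneg (y k)) (q k)]
    · exact (abs_rpow_strict_convex (hq1 k) h ht0 ht1).le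
  have key : ∑' k, |t * x k + (1 - t) * y k| ^ q k <
      ∑' k, (t * |x k| ^ q k + (1 - t) * |y k| ^ q k) :=
    Summable.tsum_lt_tsum_of_nonneg (fun k => Real.rpow_nonneg (abs_nonneg _) _) hle
      (abs_rpow_strict_convex (hq1 i) hi ht0 ht1) hg
  calc ∑' k, |t * x k + (1 - t) * y k| ^ q k
      < ∑' k, (t * |x k| ^ q k + (1 - t) * |y k| ^ q k) := key
    _ = t * ∑' k, |x k| ^ q k + (1 - t) * ∑' k, |y k| ^ q k := by
        rw [Summable.tsum_add (hx.mul_left t) (hy.mul_left (1 - t)), tsum_mul_left, tsum_mul_left]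
end

section
/- Let {q_k} be a sequence of real numbers with 1 < q_k ≤ 2 for all k and q_k → 1 as k → ∞. Then the F-norm ‖·‖_{q_k} is Gâteaux differentiable on ℓ¹ with derivative at x given by the sequence {q_k |x_k|^{q_k−1} sign(x_k)}: for all real sequences x and h with ∑_k |x_k| < ∞ and ∑_k |h_k| < ∞, the difference quotient (‖x + t h‖_{q_k} − ‖x‖_{q_k})/t converges, as the real parameter t → 0 (t ≠ 0), to ∑_k q_k |x_k|^{q_k−1} sign(x_k) h_k. -/
open Filter Topology

private lemma aux0 {a r M : ℝ} (ha : 0 ≤ a) (hr0 : 0 ≤ r) (hr1 : r ≤ 1) (haM : a ≤ M) :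
    a ^ r ≤ 1 + M := by
  have hM : 0 ≤ M := ha.trans haM
  rcases le_total a 1 with hle | hle
  · exact (Real.rpow_le_one ha hle hr0).trans (by linarith)
  · calc a ^ r ≤ a ^ (1 : ℝ) := Real.rpow_le_rpow_of_exponent_le hle hr1
      _ = a := Real.rpow_one a
      _ ≤ 1 + M := by linarith

private lemma aux1 {a p M : ℝ} (ha : 0 ≤ a) (hp1 : 1 < p) (hp2 : p ≤ 2) (haM : a ≤ M) :
    a ^ p ≤ (1 + M) * a := by
  rcases eq_or_lt_of_le ha with h0 | h0
  · rw [← h0, Real.zero_rpow (by linarith), mul_zero]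
  · have heq : a ^ p = a ^ (p - 1) * a := by
      rw [← Real.rpow_add_one h0.ne' (p - 1)]; ring_nf
    rw [heq]
    have h1 : a ^ (p - 1) ≤ 1 + M := aux0 ha (by linarith) (by linarith) haM
    nlinarith [h0.le]

private lemma sign_aux {c p : ℝ} (hp : 1 < p) :
    |c| ^ (p - 2) * c = |c| ^ (p - 1) * Real.sign c := by
  rcases lt_trichotomy c 0 with hc | hc | hc
  · rw [Real.sign_of_neg hc, abs_of_neg hc,
      show p - 1 = (p - 2) + 1 by ring, Real.rpow_add_one (by linarith : (-c : ℝ) ≠ 0)]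
    ring
  · subst hc; simp [Real.sign_zero]
  · rw [Real.sign_of_pos hc, abs_of_pos hc,
      show p - 1 = (p - 2) + 1 by ring, Real.rpow_add_one hc.ne']
    ring

theorem stmt_6 (q : ℕ → ℝ) (hq1 : ∀ k, 1 < q k) (hq2 : ∀ k, q k ≤ 2)
    (hqlim : Tendsto q atTop (𝓝 1))
    (x h : ℕ → ℝ) (hx : Summable fun k => |x k|) (hh : Summable fun k => |h k|) :
    Tendsto
      (fun t : ℝ => ((∑' k, |x k + t * h k| ^ q k) - ∑' k, |x k| ^ q k) / t)
      (𝓝[≠] 0)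
      (𝓝 (∑' k, q k * |x k| ^ (q k - 1) * Real.sign (x k) * h k)) := by
  -- notation
  set g : ℕ → ℝ → ℝ := fun k t => |x k + t * h k| ^ q k with hg_def
  set a : ℕ → ℝ := fun k => |x k| + |h k| with ha_def
  have ha_nonneg : ∀ k, 0 ≤ a k := fun k => by positivity
  have ha_sum : Summable a := hx.add hh
  set M : ℝ := ∑' k, a k with hM_def
  have haM : ∀ k, a k ≤ M := fun k => ha_sum.le_tsum k (fun j _ => ha_nonneg j)
  have hM0 : 0 ≤ M := (ha_nonneg 0).trans (haM 0)
  -- global derivative of each term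
  have hderiv : ∀ k (t : ℝ),
      HasDerivAt (g k) (q k * |x k + t * h k| ^ (q k - 2) * (x k + t * h k) * h k) t := by
    intro k t
    have h1 : HasDerivAt (fun s : ℝ => x k + s * h k) (h k) t := by
      simpa using ((hasDerivAt_id t).mul_const (h k)).const_add (x k)
    have h2 := (hasDerivAt_abs_rpow (x k + t * h k) (hq1 k)).comp t h1
    exact h2
  -- pointwise bound on |x k + u h k| for |u| ≤ 1
  have hcb : ∀ k (u : ℝ), |u| ≤ 1 → |x k + u * h k| ≤ a k := by
    intro k u hu
    calc |x k + u * h k| ≤ |x k| + |u * h k| := abs_add_le _ _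
      _ ≤ |x k| + |h k| := by
          rw [abs_mul]
          nlinarith [abs_nonneg (h k), abs_nonneg u]
  -- the bound sequence
  set B : ℕ → ℝ := fun k => 2 * (1 + M) * |h k| with hB_def
  have hB_sum : Summable B := (hh.mul_left _)
  -- derivative bound on [-1,1]
  have hdb : ∀ k (u : ℝ), |u| ≤ 1 →
      |q k * |x k + u * h k| ^ (q k - 2) * (x k + u * h k) * h k| ≤ B k := by
    intro k u hu
    set c := x k + u * h k with hc
    have h1 : |c| ^ (q k - 2) * |c| = |c| ^ (q k - 1) := by
      rcases eq_or_ne c 0 with h0 | h0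
      · rw [h0]; simp
        rw [Real.zero_rpow (by have := hq1 k; intro hcon; linarith)]
      · rw [show q k - 1 = (q k - 2) + 1 by ring,
          Real.rpow_add_one (abs_ne_zero.mpr h0)]
    have h2 : |c| ^ (q k - 1) ≤ 1 + M :=
      aux0 (abs_nonneg c) (by linarith [hq1 k]) (by linarith [hq2 k])
        ((hcb k u hu).trans (haM k))
    have hq0 : (0:ℝ) < q k := by linarith [hq1 k]
    calc |q k * |c| ^ (q k - 2) * c * h k|
        = q k * (|c| ^ (q k - 2) * |c|) * |h k| := by
          rw [abs_mul, abs_mul, abs_mul, abs_of_pos hq0,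
            abs_of_nonneg (Real.rpow_nonneg (abs_nonneg c) _)]
          ring
      _ = q k * |c| ^ (q k - 1) * |h k| := by rw [h1]
      _ ≤ 2 * (1 + M) * |h k| := by
          have h3 : (0:ℝ) ≤ |c| ^ (q k - 1) := Real.rpow_nonneg (abs_nonneg c) _
          have h4 : q k * |c| ^ (q k - 1) ≤ 2 * (1 + M) :=
            mul_le_mul (hq2 k) h2 h3 (by norm_num)
          exact mul_le_mul_of_nonneg_right h4 (abs_nonneg _)
  -- summability of each series for |t| ≤ 1
  have hsum : ∀ t : ℝ, |t| ≤ 1 → Summable (fun k => g k t) := by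
    intro t ht
    apply Summable.of_nonneg_of_le
      (fun k => Real.rpow_nonneg (abs_nonneg _) _)
      (fun k => ?_) (ha_sum.mul_left (1 + M))
    calc |x k + t * h k| ^ q k ≤ (a k) ^ q k :=
          Real.rpow_le_rpow (abs_nonneg _) (hcb k t ht) (by linarith [hq1 k])
      _ ≤ (1 + M) * a k := aux1 (ha_nonneg k) (hq1 k) (hq2 k) (haM k)
  have hsum0 : Summable (fun k => |x k| ^ q k) := by
    have := hsum 0 (by simp)
    simpa [hg_def] using this
  -- pointwise convergence of difference quotients
  set F : ℝ → ℕ → ℝ := fun t k => (g k t - g k 0) / t with hF_def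
  have hpt : ∀ k, Tendsto (F · k) (𝓝[≠] (0:ℝ))
      (𝓝 (q k * |x k| ^ (q k - 1) * Real.sign (x k) * h k)) := by
    intro k
    have hd0 := hderiv k 0
    have hd0' : HasDerivAt (g k) (q k * |x k| ^ (q k - 1) * Real.sign (x k) * h k) 0 := by
      convert hd0 using 1
      rw [show x k + 0 * h k = x k by ring]
      rw [mul_assoc (q k), ← sign_aux (hq1 k)]
      ring
    have := hasDerivAt_iff_tendsto_slope.mp hd0'
    refine this.congr (fun t => ?_)
    rw [slope_def_field, hF_def]
    simp
  -- bound on difference quotients, eventually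
  have hbd : ∀ᶠ t in 𝓝[≠] (0:ℝ), ∀ k, |F t k| ≤ B k := by
    have h1 : ∀ᶠ t in 𝓝[≠] (0:ℝ), |t| ≤ 1 := by
      apply eventually_nhdsWithin_of_eventually_nhds
      filter_upwards [eventually_abs_sub_lt (0:ℝ) one_pos] with t ht
      simpa using ht.le
    filter_upwards [h1, eventually_mem_nhdsWithin] with t ht ht0 k
    have ht0' : t ≠ 0 := ht0
    have habs : (0:ℝ) < |t| := abs_pos.mpr ht0'
    have key : |g k t - g k 0| ≤ B k * |t| := by
      have := Convex.norm_image_sub_le_of_norm_hasDerivWithin_le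
        (f := g k)
        (f' := fun u => q k * |x k + u * h k| ^ (q k - 2) * (x k + u * h k) * h k)
        (s := Set.Icc (-1 : ℝ) 1) (C := B k) (x := (0:ℝ)) (y := t)
        (fun u _ => (hderiv k u).hasDerivWithinAt)
        (fun u hu => by
          rw [Real.norm_eq_abs]
          exact hdb k u (abs_le.mpr ⟨hu.1, hu.2⟩))
        (convex_Icc _ _)
        (Set.mem_Icc.mpr (by norm_num))
        (abs_le.mp ht)
      simpa [Real.norm_eq_abs] using this
    rw [hF_def]
    simp only
    rw [abs_div]
    rw [div_le_iff₀ habs]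
    exact key
  -- Tannery / dominated convergence
  have main := tendsto_tsum_of_dominated_convergence hB_sum hpt
    (by filter_upwards [hbd] with t ht k using by simpa [Real.norm_eq_abs] using ht k)
  -- identify the two expressions eventually
  refine main.congr' ?_
  have h1 : ∀ᶠ t in 𝓝[≠] (0:ℝ), |t| ≤ 1 := by
    apply eventually_nhdsWithin_of_eventually_nhds
    filter_upwards [eventually_abs_sub_lt (0:ℝ) one_pos] with t ht
    simpa using ht.le
  filter_upwards [h1, eventually_mem_nhdsWithin] with t ht ht0
  have hst : Summable (fun k => g k t) := hsum t ht
  have hg0 : (fun k => g k 0) = fun k => |x k| ^ q k := by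
    funext k; simp [hg_def]
  calc ∑' k, F t k = ∑' k, (g k t - g k 0) * t⁻¹ := by
        simp only [hF_def, div_eq_mul_inv]
    _ = (∑' k, (g k t - g k 0)) * t⁻¹ := tsum_mul_right
    _ = ((∑' k, g k t) - ∑' k, g k 0) * t⁻¹ := by
        rw [Summable.tsum_sub hst (hg0 ▸ hsum0)]
    _ = ((∑' k, |x k + t * h k| ^ q k) - ∑' k, |x k| ^ q k) / t := by
        rw [hg0, div_eq_mul_inv]
end

section
/- (Nakano–Simons) Let {p_k} be a sequence of real numbers with 0 < p_k ≤ 1 for all k. Then ℓ^{p_k} = ℓ¹ (i.e., for every real sequence x, ∑_k |x_k|^{p_k} < ∞ if and only if ∑_k |x_k| < ∞) if and only if there exists a natural number N > 1 such that ∑_k N^{π_k} < ∞, where π_k = p_k/(p_k − 1) (a negative number) when p_k < 1, and N^{π_k} is interpreted as 0 when p_k = 1 (convention π_k = −∞). -/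
open Filter Topology Finset

open scoped Classical

private lemma key_ineq {p N t : ℝ} (hp0 : 0 < p) (hp1 : p < 1) (hN : 1 ≤ N) (ht : 0 ≤ t) :
    t ^ p ≤ N * t + N ^ (p / (p - 1)) := by
  have hN0 : 0 < N := lt_of_lt_of_le one_pos hN
  have hp1' : p - 1 < 0 := by linarith
  have hp1'' : p - 1 ≠ 0 := ne_of_lt hp1'
  set A := N ^ ((p - 1)⁻¹) with hA
  have hA0 : 0 < A := Real.rpow_pos_of_pos hN0 _
  have hNt : 0 ≤ N * t := mul_nonneg hN0.le ht
  have hNp : 0 ≤ N ^ (p / (p - 1)) := (Real.rpow_pos_of_pos hN0 _).le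
  rcases le_total t A with h | h
  · have h1 : t ^ p ≤ A ^ p := Real.rpow_le_rpow ht h hp0.le
    have hAp : A ^ p = N ^ (p / (p - 1)) := by
      rw [hA, ← Real.rpow_mul hN0.le, inv_mul_eq_div]
    linarith
  · have ht0 : 0 < t := lt_of_lt_of_le hA0 h
    have h1 : t ^ (p - 1) ≤ A ^ (p - 1) := Real.rpow_le_rpow_of_nonpos hA0 h hp1'.le
    have hA1 : A ^ (p - 1) = N := by
      rw [hA, ← Real.rpow_mul hN0.le, inv_mul_cancel₀ hp1'', Real.rpow_one]
    have h2 : t ^ p = t ^ (p - 1) * t := by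
      nth_rewrite 1 [show p = (p - 1) + 1 by ring]
      rw [Real.rpow_add ht0, Real.rpow_one]
    have h3 := mul_le_mul_of_nonneg_right (h1.trans_eq hA1) ht0.le
    linarith [h2 ▸ h3]

private lemma lp_subset_l1 {p : ℕ → ℝ} (hp0 : ∀ k, 0 < p k) (hp1 : ∀ k, p k ≤ 1) {x : ℕ → ℝ}
    (hs : Summable fun k => |x k| ^ p k) : Summable fun k => |x k| := by
  have h0 : Tendsto (fun k => |x k| ^ p k) atTop (𝓝 0) := hs.tendsto_atTop_zero
  have hev : ∀ᶠ k in atTop, |x k| ≤ |x k| ^ p k := by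
    filter_upwards [h0.eventually (gt_mem_nhds one_pos)] with k hk
    rcases eq_or_lt_of_le (abs_nonneg (x k)) with h | h
    · rw [← h, Real.zero_rpow (hp0 k).ne']
    · have hx1 : |x k| ≤ 1 := by
        by_contra hc
        push_neg at hc
        exact absurd (Real.one_le_rpow hc.le (hp0 k).le) (by linarith)
      calc |x k| = |x k| ^ (1 : ℝ) := (Real.rpow_one _).symm
        _ ≤ |x k| ^ p k := Real.rpow_le_rpow_of_exponent_ge h hx1 (hp1 k)
  obtain ⟨m, hm⟩ := eventually_atTop.mp hev
  rw [← summable_nat_add_iff m] at hs ⊢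
  exact Summable.of_nonneg_of_le (fun k => abs_nonneg _)
    (fun k => hm (k + m) (Nat.le_add_left m k)) hs

private lemma l1_subset_lp {p : ℕ → ℝ} (hp0 : ∀ k, 0 < p k) (hp1 : ∀ k, p k ≤ 1) {N : ℕ}
    (hN : 1 < N)
    (hsum : Summable fun k => if p k = 1 then (0 : ℝ) else (N : ℝ) ^ (p k / (p k - 1)))
    {x : ℕ → ℝ} (hx : Summable fun k => |x k|) : Summable fun k => |x k| ^ p k := by
  have hN1 : (1 : ℝ) ≤ (N : ℝ) := by exact_mod_cast hN.le
  have hg : Summable fun k =>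
      (N : ℝ) * |x k| + (if p k = 1 then (0 : ℝ) else (N : ℝ) ^ (p k / (p k - 1))) :=
    (hx.mul_left _).add hsum
  refine Summable.of_nonneg_of_le (fun k => Real.rpow_nonneg (abs_nonneg _) _) (fun k => ?_) hg
  by_cases h : p k = 1
  · simp only [h, if_pos, Real.rpow_one]
    nlinarith [abs_nonneg (x k)]
  · rw [if_neg h]
    exact key_ineq (hp0 k) (lt_of_le_of_ne (hp1 k) h) hN1 (abs_nonneg _)

/-- The summand in the Nakano–Simons condition. -/
private noncomputable def FF (p : ℕ → ℝ) (N k : ℕ) : ℝ :=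
  if p k = 1 then (0 : ℝ) else (N : ℝ) ^ (p k / (p k - 1))

private lemma FF_nonneg (p : ℕ → ℝ) (N k : ℕ) : 0 ≤ FF p N k := by
  unfold FF; split
  · norm_num
  · exact Real.rpow_nonneg (Nat.cast_nonneg N) _

private lemma FF_le_one {p : ℕ → ℝ} (hp0 : ∀ k, 0 < p k) (hp1 : ∀ k, p k ≤ 1) {N : ℕ}
    (hN : 1 ≤ N) (k : ℕ) : FF p N k ≤ 1 := by
  unfold FF; split
  · norm_num
  · next h =>
    have hk1 : p k < 1 := lt_of_le_of_ne (hp1 k) h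
    refine Real.rpow_le_one_of_one_le_of_nonpos (by exact_mod_cast hN) ?_
    apply div_nonpos_of_nonneg_of_nonpos (hp0 k).le
    linarith

/-- The recursively defined block boundaries. -/
private noncomputable def gseq (p : ℕ → ℝ)
    (hex : ∀ n m : ℕ, ∃ j, 1 ≤ ∑ k ∈ Finset.Ico m j, FF p (2 ^ (n + 1)) k) : ℕ → ℕ
  | 0 => 0
  | n + 1 => Nat.find (hex n (gseq p hex n))

/-- Nakano–Simons: for exponents `0 < p k ≤ 1`, one has `ℓ^{p_k} = ℓ¹`
(i.e. for every real sequence `x`, `∑_k |x_k|^{p_k} < ∞ ↔ ∑_k |x_k| < ∞`) if and only if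
there is a natural number `N > 1` with `∑_k N^{π_k} < ∞`, where `π_k = p_k/(p_k − 1)`
when `p_k < 1` and `N^{π_k}` is interpreted as `0` when `p_k = 1`. -/
theorem stmt_8 (p : ℕ → ℝ) (hp0 : ∀ k, 0 < p k) (hp1 : ∀ k, p k ≤ 1) :
    (∀ x : ℕ → ℝ, (Summable fun k => |x k| ^ p k) ↔ Summable fun k => |x k|) ↔
    (∃ N : ℕ, 1 < N ∧
      Summable fun k => if p k = 1 then (0 : ℝ) else (N : ℝ) ^ (p k / (p k - 1))) := by
  constructor
  · intro hiff
    by_contra hno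
    push_neg at hno
    -- every N > 1 gives a non-summable series
    have hns : ∀ N : ℕ, 1 < N → ¬ Summable (FF p N) := fun N hN => hno N hN
    -- existence of block endpoints
    have hex : ∀ n m : ℕ, ∃ j, 1 ≤ ∑ k ∈ Finset.Ico m j, FF p (2 ^ (n + 1)) k := by
      intro n m
      have h2 : (1:ℕ) < 2 ^ (n + 1) := Nat.one_lt_two_pow_iff.mpr (Nat.succ_ne_zero n)
      have ht := (not_summable_iff_tendsto_nat_atTop_of_nonneg
        (fun k => FF_nonneg p _ k)).mp (hns _ h2)
      obtain ⟨j, hj1, hj2⟩ := ((ht.eventually_ge_atTop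
        (∑ k ∈ Finset.range m, FF p (2 ^ (n + 1)) k + 1)).and (eventually_ge_atTop m)).exists
      refine ⟨j, ?_⟩
      rw [Finset.sum_Ico_eq_sub _ hj2]
      linarith
    set g := gseq p hex with hgdef
    have hg0 : g 0 = 0 := rfl
    have hgspec : ∀ n, 1 ≤ ∑ k ∈ Finset.Ico (g n) (g (n + 1)), FF p (2 ^ (n + 1)) k :=
      fun n => Nat.find_spec (hex n (g n))
    have hglt : ∀ n, g n < g (n + 1) := by
      intro n
      by_contra h
      push_neg at h
      have := hgspec n
      rw [Finset.Ico_eq_empty (not_lt.mpr h), Finset.sum_empty] at this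
      linarith
    have hgmono : StrictMono g := strictMono_nat_of_lt_succ hglt
    have hgle : ∀ n, n ≤ g n := fun n => hgmono.le_apply
    -- block sums are at most 2
    have hub : ∀ n, ∑ k ∈ Finset.Ico (g n) (g (n + 1)), FF p (2 ^ (n + 1)) k ≤ 2 := by
      intro n
      have hmj : g n < g (n + 1) := hglt n
      have hm : g n ≤ g (n + 1) - 1 := by omega
      have hmin : ¬ 1 ≤ ∑ k ∈ Finset.Ico (g n) (g (n + 1) - 1), FF p (2 ^ (n + 1)) k := by
        have hlt : g (n + 1) - 1 < Nat.find (hex n (g n)) := by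
          have : g (n + 1) = Nat.find (hex n (g n)) := rfl
          omega
        exact Nat.find_min (hex n (g n)) hlt
      push_neg at hmin
      have hsucc : g (n + 1) = (g (n + 1) - 1) + 1 := by omega
      rw [hsucc, Finset.sum_Ico_succ_top hm]
      have := FF_le_one hp0 hp1 (Nat.one_le_two_pow (n := n + 1)) (g (n + 1) - 1)
      linarith
    -- the block index of k
    set blk : ℕ → ℕ := fun k => Nat.findGreatest (fun n => g n ≤ k) k with hblkdef
    have hblk_le : ∀ k, g (blk k) ≤ k := by
      intro k
      have h0 : (fun n => g n ≤ k) 0 := by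
        show g 0 ≤ k
        rw [hg0]; exact Nat.zero_le k
      exact Nat.findGreatest_spec (P := fun n => g n ≤ k) (Nat.zero_le k) h0
    have hblk_lt : ∀ k, k < g (blk k + 1) := by
      intro k
      by_contra h
      push_neg at h
      have h1 : blk k + 1 ≤ k := le_trans (hgle _) h
      have h2 : blk k + 1 ≤ blk k := Nat.le_findGreatest h1 h
      omega
    have hblk_eq : ∀ n k, g n ≤ k → k < g (n + 1) → blk k = n := by
      intro n k h1 h2
      rcases lt_trichotomy (blk k) n with h | h | h
      · have : g (blk k + 1) ≤ g n := hgmono.monotone (by omega)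
        have := hblk_lt k
        omega
      · exact h
      · have : g (n + 1) ≤ g (blk k) := hgmono.monotone (by omega)
        have := hblk_le k
        omega
    -- the bad sequence
    set x : ℕ → ℝ := fun k => FF p (2 ^ (blk k + 1)) k / ((2 : ℝ) ^ (blk k + 1)) with hxdef
    have hx0 : ∀ k, 0 ≤ x k := fun k =>
      div_nonneg (FF_nonneg p _ k) (by positivity)
    have habs : (fun k => |x k|) = x := funext fun k => abs_of_nonneg (hx0 k)
    -- |x k| ^ p k = FF p (2^(blk k + 1)) k
    have hxp : ∀ k, |x k| ^ p k = FF p (2 ^ (blk k + 1)) k := by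
      intro k
      rw [abs_of_nonneg (hx0 k)]
      by_cases h : p k = 1
      · have hx0' : x k = 0 := by
          simp only [hxdef, FF, if_pos h, zero_div]
        rw [hx0', h, Real.rpow_one]
        simp [FF, h]
      · have hk1 : p k < 1 := lt_of_le_of_ne (hp1 k) h
        have hd : p k - 1 ≠ 0 := by intro hc; apply h; linarith
        have hNpos : (0 : ℝ) < ((2 ^ (blk k + 1) : ℕ) : ℝ) := by positivity
        have hcast : ((2 ^ (blk k + 1) : ℕ) : ℝ) = (2 : ℝ) ^ (blk k + 1) := by
          push_cast; ring
        have hxk : x k = ((2 ^ (blk k + 1) : ℕ) : ℝ) ^ (p k / (p k - 1) - 1) := by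
          simp only [hxdef, FF, if_neg h]
          rw [Real.rpow_sub hNpos, Real.rpow_one, hcast]
        rw [hxk, ← Real.rpow_mul hNpos.le]
        have harith : (p k / (p k - 1) - 1) * p k = p k / (p k - 1) := by
          field_simp
          ring
        rw [harith]
        simp only [FF, if_neg h]
    -- x is summable
    have hxblock : ∀ n, ∑ k ∈ Finset.Ico (g n) (g (n + 1)), x k ≤ 2 / 2 ^ (n + 1) := by
      intro n
      have heq : ∀ k ∈ Finset.Ico (g n) (g (n + 1)),
          x k = FF p (2 ^ (n + 1)) k / ((2 : ℝ) ^ (n + 1)) := by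
        intro k hk
        rw [Finset.mem_Ico] at hk
        simp only [hxdef, hblk_eq n k hk.1 hk.2]
      rw [Finset.sum_congr rfl heq, ← Finset.sum_div]
      apply div_le_div_of_nonneg_right (hub n) (by positivity) |>.trans_eq rfl
    have hxsum : Summable x := by
      apply summable_of_sum_range_le (c := 2) hx0
      intro M
      have h1 : ∑ k ∈ Finset.range M, x k ≤ ∑ k ∈ Finset.range (g M), x k :=
        Finset.sum_le_sum_of_subset_of_nonneg
          (Finset.range_subset_range.mpr (hgle M)) (fun k _ _ => hx0 k)
      have h2 : ∀ n : ℕ, ∑ k ∈ Finset.range (g n), x k ≤ 2 - 2 / 2 ^ n := by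
        intro n
        induction n with
        | zero => rw [hg0]; norm_num
        | succ n ih =>
          rw [← Finset.sum_range_add_sum_Ico _ (hglt n).le]
          have h2n : (0:ℝ) < 2 ^ n := by positivity
          have he : (2:ℝ) / 2 ^ (n + 1) + 2 / 2 ^ (n + 1) = 2 / 2 ^ n := by
            rw [pow_succ]; field_simp; ring
          have hb := hxblock n
          linarith
      have h3 : (0:ℝ) ≤ 2 / 2 ^ M := by positivity
      linarith [h2 M, h1, h3]
    -- x^p is not summable
    have hnsum : ¬ Summable (fun k => |x k| ^ p k) := by
      intro hs
      have hlb : ∀ n : ℕ, (n : ℝ) ≤ ∑ k ∈ Finset.range (g n), |x k| ^ p k := by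
        intro n
        induction n with
        | zero => simp [hg0]
        | succ n ih =>
          rw [← Finset.sum_range_add_sum_Ico _ (hglt n).le]
          have hblock : 1 ≤ ∑ k ∈ Finset.Ico (g n) (g (n + 1)), |x k| ^ p k := by
            have heq : ∀ k ∈ Finset.Ico (g n) (g (n + 1)),
                |x k| ^ p k = FF p (2 ^ (n + 1)) k := by
              intro k hk
              rw [Finset.mem_Ico] at hk
              rw [hxp k, hblk_eq n k hk.1 hk.2]
            rw [Finset.sum_congr rfl heq]
            exact hgspec n
          push_cast
          linarith
      have hsum_le : ∀ n, ∑ k ∈ Finset.range (g n), |x k| ^ p k ≤ ∑' k, |x k| ^ p k :=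
        fun n => Summable.sum_le_tsum _ (fun k _ => Real.rpow_nonneg (abs_nonneg _) _) hs
      obtain ⟨n, hn⟩ := exists_nat_gt (∑' k, |x k| ^ p k)
      have := (hlb n).trans (hsum_le n)
      linarith
    have hx := hiff x
    rw [habs] at hx
    exact hnsum (hx.mpr hxsum)
  · rintro ⟨N, hN, hsum⟩ x
    exact ⟨lp_subset_l1 hp0 hp1, l1_subset_lp hp0 hp1 hN hsum⟩
end

section
/- Let {q_k} be a sequence of real numbers with 1 ≤ q_k < ∞ for all k. Then ℓ^{q_k} = ℓ¹ (i.e., for every real sequence x, ∑_k |x_k|^{q_k} < ∞ if and only if ∑_k |x_k| < ∞) if and only if there exists a natural number N > 1 such that ∑_k N^{−1/(q_k−1)} < ∞, where the term N^{−1/(q_k−1)} is interpreted as 0 when q_k = 1 (convention N^{−∞} = 0). -/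
open Filter Topology Finset


noncomputable def aN (N q : ℝ) : ℝ := if q = 1 then 0 else N ^ (-(1 / (q - 1)))

lemma aN_nonneg {N q : ℝ} (hN : 0 ≤ N) : 0 ≤ aN N q := by
  unfold aN; split
  · exact le_refl 0
  · exact Real.rpow_nonneg hN _

lemma aN_lt_one {N q : ℝ} (hN : 1 < N) (hq : 1 ≤ q) : aN N q < 1 := by
  unfold aN; split
  · norm_num
  · rename_i h
    apply Real.rpow_lt_one_of_one_lt_of_neg hN
    have h1 : 1 < q := lt_of_le_of_ne hq (Ne.symm h)
    have h1' : 0 < q - 1 := by linarith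
    have h2 : 0 < 1 / (q - 1) := by positivity
    linarith

lemma key_ineq_s9 {N q : ℝ} (hN : 1 ≤ N) (hq : 1 ≤ q) {a : ℝ} (ha : 0 ≤ a) :
    a ≤ N * a ^ q + aN N q := by
  have h0 : 0 ≤ aN N q := aN_nonneg (by linarith)
  rcases eq_or_lt_of_le hq with h1 | h1
  · rw [← h1, Real.rpow_one]
    nlinarith [aN_nonneg (q := (1:ℝ)) (show (0:ℝ) ≤ N by linarith)]
  · have hq1 : q ≠ 1 := ne_of_gt h1
    have hpos : 0 < q - 1 := by linarith
    have hNpos : 0 < N := by linarith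
    set t := N ^ (-(1 / (q - 1))) with ht
    have htpos : 0 < t := Real.rpow_pos_of_pos hNpos _
    have haN : aN N q = t := by simp only [aN, if_neg hq1]; rfl
    rcases le_or_gt a t with h | h
    · have : 0 ≤ N * a ^ q := by positivity
      rw [haN]; linarith
    · have hapos : 0 < a := htpos.trans h
      have ht2 : t ^ (q - 1) = 1 / N := by
        rw [ht, ← Real.rpow_mul hNpos.le]
        have he : -(1 / (q - 1)) * (q - 1) = -1 := by field_simp
        rw [he, Real.rpow_neg_one, one_div]
      have haq : a ^ q = a * a ^ (q - 1) := by
        calc a ^ q = a ^ ((1:ℝ) + (q - 1)) := by rw [show (1:ℝ) + (q-1) = q by ring]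
        _ = a ^ (1:ℝ) * a ^ (q - 1) := Real.rpow_add hapos _ _
        _ = a * a ^ (q - 1) := by rw [Real.rpow_one]
      have hab : t ^ (q - 1) ≤ a ^ (q - 1) :=
        Real.rpow_le_rpow htpos.le h.le hpos.le
      rw [ht2] at hab
      have hfin : a ≤ N * a ^ q := by
        rw [haq]
        calc a = N * (a * (1 / N)) := by field_simp
        _ ≤ N * (a * a ^ (q - 1)) := by
          apply mul_le_mul_of_nonneg_left _ hNpos.le
          exact mul_le_mul_of_nonneg_left hab hapos.le
      linarith

lemma aN_rpow {N q : ℝ} (hN : 0 < N) (hq : 1 ≤ q) : aN N q ^ q = aN N q / N := by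
  unfold aN; split
  · rename_i h
    rw [h, Real.rpow_one, zero_div]
  · rename_i h
    rw [← Real.rpow_mul hN.le]
    have hq1 : q - 1 ≠ 0 := by
      intro hc; apply h; linarith [sub_eq_zero.mp hc]
    have he : -(1 / (q - 1)) * q = -1 + -(1 / (q - 1)) := by field_simp; ring
    rw [he, Real.rpow_add hN, Real.rpow_neg_one]
    ring


lemma easy_dir (q : ℕ → ℝ) (hq1 : ∀ k, 1 ≤ q k) (N : ℕ) (hN : 1 < N)
    (hs : Summable fun k => aN (N : ℝ) (q k)) :
    ∀ x : ℕ → ℝ, (Summable fun k => |x k| ^ q k) ↔ Summable fun k => |x k| := by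
  have hN1 : (1 : ℝ) ≤ (N : ℝ) := by exact_mod_cast hN.le
  intro x
  constructor
  · intro hx
    exact Summable.of_nonneg_of_le (fun k => abs_nonneg _)
      (fun k => key_ineq_s9 hN1 (hq1 k) (abs_nonneg _)) ((hx.mul_left (N : ℝ)).add hs)
  · intro hx
    have htend : Tendsto (fun k => |x k|) atTop (𝓝 0) := hx.tendsto_atTop_zero
    have hev : ∀ᶠ k in atTop, |x k| < 1 := htend.eventually_lt_const one_pos
    obtain ⟨K, hK⟩ := eventually_atTop.1 hev
    rw [← summable_nat_add_iff K]
    apply Summable.of_nonneg_of_le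
      (fun k => Real.rpow_nonneg (abs_nonneg _) _) (fun k => ?_)
      ((summable_nat_add_iff K).2 hx)
    rcases eq_or_lt_of_le (abs_nonneg (x (k + K))) with h0 | h0
    · rw [← h0, Real.zero_rpow (by linarith [hq1 (k + K)] : q (k + K) ≠ 0)]
    · calc |x (k + K)| ^ q (k + K) ≤ |x (k + K)| ^ (1 : ℝ) :=
            Real.rpow_le_rpow_of_exponent_ge h0 (hK _ (Nat.le_add_left K k)).le (hq1 _)
      _ = |x (k + K)| := Real.rpow_one _

lemma hard_dir (q : ℕ → ℝ) (hq1 : ∀ k, 1 ≤ q k)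
    (h : ∀ N : ℕ, 1 < N → ¬ Summable fun k => aN (N : ℝ) (q k)) :
    ∃ x : ℕ → ℝ, (Summable fun k => |x k| ^ q k) ∧ ¬ Summable fun k => |x k| := by
  set A : ℕ → ℕ → ℝ := fun n k => aN ((2 : ℝ) ^ (n + 1)) (q k) with hAdef
  have h2pow : ∀ n : ℕ, (1 : ℝ) < (2 : ℝ) ^ (n + 1) := fun n =>
    one_lt_pow₀ (by norm_num) (Nat.succ_ne_zero n)
  have hA : ∀ n, ¬ Summable (A n) := by
    intro n hs
    apply h (2 ^ (n + 1)) (Nat.one_lt_two_pow_iff.mpr (Nat.succ_ne_zero n))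
    have : ((2 ^ (n + 1) : ℕ) : ℝ) = (2 : ℝ) ^ (n + 1) := by push_cast; ring
    rw [this]
    exact hs
  have hA0 : ∀ n k, 0 ≤ A n k := fun n k => aN_nonneg (by positivity)
  have hA1 : ∀ n k, A n k < 1 := fun n k => aN_lt_one (h2pow n) (hq1 k)
  have hT : ∀ n, Tendsto (fun M => ∑ k ∈ range M, A n k) atTop atTop := fun n =>
    (not_summable_iff_tendsto_nat_atTop_of_nonneg (hA0 n)).1 (hA n)
  have hE : ∀ n m, ∃ M, m < M ∧ 1 ≤ ∑ k ∈ Ico m M, A n k := by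
    intro n m
    obtain ⟨M0, hM0⟩ := eventually_atTop.1
      ((hT n).eventually_ge_atTop (∑ k ∈ range m, A n k + 1))
    refine ⟨max M0 (m + 1), lt_of_lt_of_le (Nat.lt_succ_self m) (le_max_right _ _), ?_⟩
    rw [Finset.sum_Ico_eq_sub _ (le_trans (Nat.le_succ m) (le_max_right _ _))]
    have := hM0 (max M0 (m + 1)) (le_max_left _ _)
    linarith
  set F : ℕ → ℕ → ℕ := fun n m => Nat.find (hE n m) with hFdef
  have hF1 : ∀ n m, m < F n m := fun n m => (Nat.find_spec (hE n m)).1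
  have hF2 : ∀ n m, 1 ≤ ∑ k ∈ Ico m (F n m), A n k := fun n m => (Nat.find_spec (hE n m)).2
  have hF3 : ∀ n m, ∑ k ∈ Ico m (F n m), A n k < 2 := by
    intro n m
    rcases eq_or_lt_of_le (Nat.succ_le_of_lt (hF1 n m)) with hc | hc
    · rw [← hc]
      rw [Finset.sum_Ico_succ_top le_rfl]
      simp only [Finset.Ico_self, Finset.sum_empty, zero_add]
      linarith [hA1 n m]
    · have hm : m < F n m - 1 := by omega
      have hnot := Nat.find_min (hE n m) (show F n m - 1 < F n m by omega)
      push_neg at hnot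
      have hlt : ∑ k ∈ Ico m (F n m - 1), A n k < 1 := not_le.1 (by
        intro hcon; exact absurd (hnot hm) (not_lt.2 hcon))
      have heq : F n m = (F n m - 1) + 1 := by omega
      rw [heq, Finset.sum_Ico_succ_top (by omega : m ≤ F n m - 1)]
      linarith [hA1 n (F n m - 1)]
  -- the block boundaries
  set idx : ℕ → ℕ := fun n => Nat.rec 0 (fun n ih => F n ih) n with hidxdef
  have hidx0 : idx 0 = 0 := rfl
  have hidxS : ∀ n, idx (n + 1) = F n (idx n) := fun n => rfl
  have hsm : StrictMono idx := strictMono_nat_of_lt_succ (fun n => by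
    rw [hidxS]; exact hF1 n (idx n))
  have hge : ∀ n, n ≤ idx n := fun n => hsm.le_apply
  have hb : ∀ k : ℕ, ∃ n, k < idx (n + 1) := fun k =>
    ⟨k, lt_of_lt_of_le (Nat.lt_succ_self k) (hge (k + 1))⟩
  set blk : ℕ → ℕ := fun k => Nat.find (hb k) with hblkdef
  have hblk1 : ∀ k, k < idx (blk k + 1) := fun k => Nat.find_spec (hb k)
  have hblk2 : ∀ j k, idx j ≤ k → k < idx (j + 1) → blk k = j := by
    intro j k h1 h2
    have hle : blk k ≤ j := Nat.find_min' (hb k) h2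
    rcases eq_or_lt_of_le hle with hc | hc
    · exact hc
    · exfalso
      have := hsm.monotone (show blk k + 1 ≤ j from hc)
      have := hblk1 k
      omega
  set x : ℕ → ℝ := fun k => A (blk k) k with hxdef
  have hx0 : ∀ k, 0 ≤ x k := fun k => hA0 _ k
  have habs : ∀ k, |x k| = x k := fun k => abs_of_nonneg (hx0 k)
  -- block sums of x agree with block sums of A j
  have hbx : ∀ j, ∀ k ∈ Ico (idx j) (idx (j + 1)), x k = A j k := by
    intro j k hk
    rw [Finset.mem_Ico] at hk
    rw [hxdef]
    simp only
    rw [hblk2 j k hk.1 hk.2]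
  -- non-summability of x
  have hpart : ∀ n : ℕ, (n + 1 : ℝ) ≤ ∑ k ∈ range (idx (n + 1)), x k := by
    intro n
    induction n with
    | zero =>
      have h0 : (1 : ℝ) ≤ ∑ k ∈ Ico (idx 0) (idx (0 + 1)), x k := by
        rw [Finset.sum_congr rfl (hbx 0)]
        exact hF2 0 (idx 0)
      rw [range_eq_Ico]
      rw [hidx0] at h0
      push_cast
      simpa using h0
    | succ n ih =>
      have hsplit : ∑ k ∈ range (idx (n + 2)), x k =
          ∑ k ∈ range (idx (n + 1)), x k + ∑ k ∈ Ico (idx (n + 1)) (idx (n + 2)), x k := by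
        simp only [range_eq_Ico]
        exact (Finset.sum_Ico_consecutive _ (Nat.zero_le _)
          (hsm.monotone (Nat.le_succ (n + 1)))).symm
      have hblock : (1 : ℝ) ≤ ∑ k ∈ Ico (idx (n + 1)) (idx (n + 2)), x k := by
        rw [Finset.sum_congr rfl (hbx (n + 1))]
        exact hF2 (n + 1) (idx (n + 1))
      rw [hsplit]
      push_cast
      push_cast at ih
      linarith
  have hnotsum : ¬ Summable fun k => |x k| := by
    simp only [habs]
    intro hs
    set n := ⌈∑' k, x k⌉₊ with hndef
    have h1 := hpart n
    have h2 := Summable.sum_le_tsum (range (idx (n + 1))) (fun i _ => hx0 i) hs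
    have h3 : (∑' k, x k) ≤ (n : ℝ) := Nat.le_ceil _
    linarith
  -- summability of x^q
  have hqblock : ∀ j, ∑ k ∈ Ico (idx j) (idx (j + 1)), x k ^ q k ≤ (1 / 2 : ℝ) ^ j := by
    intro j
    have hrw : ∀ k ∈ Ico (idx j) (idx (j + 1)), x k ^ q k = A j k / (2 : ℝ) ^ (j + 1) := by
      intro k hk
      rw [hbx j k hk]
      exact aN_rpow (by positivity) (hq1 k)
    rw [Finset.sum_congr rfl hrw, ← Finset.sum_div]
    have hsumlt : ∑ k ∈ Ico (idx j) (idx (j + 1)), A j k < 2 := hF3 j (idx j)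
    have hp : (0 : ℝ) < (2 : ℝ) ^ (j + 1) := by positivity
    have : (2 : ℝ) / (2 : ℝ) ^ (j + 1) = (1 / 2 : ℝ) ^ j := by
      rw [pow_succ, div_pow, one_pow]
      field_simp
    rw [← this]
    gcongr
  have hqpart : ∀ n : ℕ, ∑ k ∈ range (idx n), x k ^ q k ≤ 2 := by
    intro n
    have hdecomp : ∑ k ∈ range (idx n), x k ^ q k =
        ∑ j ∈ range n, ∑ k ∈ Ico (idx j) (idx (j + 1)), x k ^ q k := by
      induction n with
      | zero => simp [hidx0]
      | succ n ih =>
        rw [Finset.sum_range_succ, ← ih]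
        simp only [range_eq_Ico]
        exact (Finset.sum_Ico_consecutive _ (Nat.zero_le _) (hsm.monotone (Nat.le_succ n))).symm
    rw [hdecomp]
    calc ∑ j ∈ range n, ∑ k ∈ Ico (idx j) (idx (j + 1)), x k ^ q k
        ≤ ∑ j ∈ range n, (1 / 2 : ℝ) ^ j := Finset.sum_le_sum (fun j _ => hqblock j)
    _ ≤ 2 := sum_geometric_two_le n
  have hxq0 : ∀ k, 0 ≤ x k ^ q k := fun k => Real.rpow_nonneg (hx0 k) _
  have hsummable : Summable fun k => |x k| ^ q k := by
    simp only [habs]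
    apply summable_of_sum_range_le hxq0
    intro n
    calc ∑ i ∈ range n, x i ^ q i ≤ ∑ i ∈ range (idx n), x i ^ q i :=
          Finset.sum_le_sum_of_subset_of_nonneg
            (Finset.range_subset_range.2 (hge n)) (fun i _ _ => hxq0 i)
    _ ≤ 2 := hqpart n
  exact ⟨x, hsummable, hnotsum⟩


/-- for exponents `1 ≤ q k < ∞`, one has `ℓ^{q_k} = ℓ¹`
(i.e. for every real sequence `x`, `∑_k |x_k|^{q_k} < ∞ ↔ ∑_k |x_k| < ∞`) if and only if
there is a natural number `N > 1` with `∑_k N^{−1/(q_k−1)} < ∞`, the term being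
interpreted as `0` when `q_k = 1` (convention `N^{−∞} = 0`). -/
theorem stmt_9 (q : ℕ → ℝ) (hq1 : ∀ k, 1 ≤ q k) :
    (∀ x : ℕ → ℝ, (Summable fun k => |x k| ^ q k) ↔ Summable fun k => |x k|) ↔
    (∃ N : ℕ, 1 < N ∧
      Summable fun k => if q k = 1 then (0 : ℝ) else (N : ℝ) ^ (-(1 / (q k - 1)))) := by
  constructor
  · intro H
    by_contra hc
    push_neg at hc
    obtain ⟨x, h1, h2⟩ := hard_dir q hq1 (fun N hN hs => hc N hN (by
      have : (fun k => if q k = 1 then (0 : ℝ) else (N : ℝ) ^ (-(1 / (q k - 1)))) =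
          fun k => aN (N : ℝ) (q k) := by
        funext k; rfl
      rw [this]
      exact hs))
    exact h2 ((H x).1 h1)
  · rintro ⟨N, hN, hs⟩
    refine easy_dir q hq1 N hN ?_
    have : (fun k => aN (N : ℝ) (q k)) =
        fun k => if q k = 1 then (0 : ℝ) else (N : ℝ) ^ (-(1 / (q k - 1))) := by
      funext k; rfl
    rw [this]
    exact hs
end

section
/- For the exponents q_k = 1 + 1/k (k ≥ 1), one has ℓ^{q_k} = ℓ¹: for every real sequence x = {x_k} (k ≥ 1), the series ∑_k |x_k|^{1 + 1/k} converges if and only if the series ∑_k |x_k| converges. -/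
open Filter Topology

lemma key_bound (a : ℝ) (ha : 0 ≤ a) (k : ℕ) :
    a ≤ (1/2 : ℝ) ^ k + 2 * a ^ ((1 : ℝ) + 1 / (k : ℝ)) := by
  rcases le_or_gt a ((1/2 : ℝ) ^ k) with h | h
  · have : 0 ≤ a ^ ((1 : ℝ) + 1 / (k : ℝ)) := Real.rpow_nonneg ha _
    nlinarith
  · have ha0 : 0 < a := lt_of_le_of_lt (by positivity) h
    rcases Nat.eq_zero_or_pos k with rfl | hk
    · simp [Real.rpow_natCast]
      nlinarith
    have hk0 : (k : ℝ) ≠ 0 := by positivity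
    have h1 : ((1/2 : ℝ) ^ k) ^ ((1 : ℝ) / k) ≤ a ^ ((1 : ℝ) / k) :=
      Real.rpow_le_rpow (by positivity) h.le (by positivity)
    have h2 : ((1/2 : ℝ) ^ k) ^ ((1 : ℝ) / k) = (1/2 : ℝ) := by
      rw [← Real.rpow_natCast (1/2 : ℝ) k, ← Real.rpow_mul (by norm_num),
        mul_one_div_cancel hk0, Real.rpow_one]
    have h3 : a ^ ((1 : ℝ) + 1 / (k : ℝ)) = a * a ^ ((1 : ℝ) / k) := by
      rw [Real.rpow_add ha0, Real.rpow_one]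
    rw [h3]
    nlinarith [Real.rpow_nonneg ha ((1:ℝ)/k), pow_nonneg (by norm_num : (0:ℝ) ≤ 1/2) k]

theorem stmt_10 (x : ℕ → ℝ) :
    (Summable fun k : ℕ => |x k| ^ ((1 : ℝ) + 1 / (k : ℝ))) ↔
      Summable fun k : ℕ => |x k| := by
  constructor
  · intro h
    have hs : Summable fun k : ℕ => (1/2 : ℝ) ^ k + 2 * |x k| ^ ((1 : ℝ) + 1 / (k : ℝ)) :=
      (summable_geometric_of_lt_one (by norm_num) (by norm_num)).add (h.mul_left 2)
    exact hs.of_nonneg_of_le (fun k => abs_nonneg _) (fun k => key_bound _ (abs_nonneg _) k)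
  · intro h
    have h0 : Tendsto (fun k => |x k|) atTop (𝓝 0) := h.tendsto_atTop_zero
    have hev : ∀ᶠ k in atTop, |x k| ≤ 1 :=
      (h0.eventually (eventually_le_nhds (by norm_num : (0:ℝ) < 1)))
    refine h.of_norm_bounded_eventually ?_
    rw [Nat.cofinite_eq_atTop]
    filter_upwards [hev] with k hk
    rw [Real.norm_eq_abs, abs_of_nonneg (Real.rpow_nonneg (abs_nonneg _) _)]
    calc |x k| ^ ((1 : ℝ) + 1 / (k : ℝ)) ≤ |x k| ^ (1 : ℝ) := by
          rcases eq_or_lt_of_le (abs_nonneg (x k)) with h' | h'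
          · rw [← h', Real.zero_rpow (by positivity), Real.rpow_one]
          · exact Real.rpow_le_rpow_of_exponent_ge h' hk
              (le_add_of_nonneg_right (by positivity))
      _ = |x k| := Real.rpow_one _
end

section
/- For the exponents q_k = 1 + 1/log(k) (k ≥ 2, natural logarithm), one has ℓ^{q_k} = ℓ¹: for every real sequence x = {x_k} (k ≥ 2), the series ∑_k |x_k|^{1 + 1/log(k)} converges if and only if the series ∑_k |x_k| converges. -/
open Filter Topology

/-- for the exponents `q_k = 1 + 1/log k` (`k ≥ 2`, natural logarithm),
`ℓ^{q_k} = ℓ¹`: `∑_k |x_k|^{1+1/log k}` converges iff `∑_k |x_k|` converges.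
(For `k = 0, 1` we have `log k = 0`, and the Lean convention `1/0 = 0` makes the exponent
`1`, so those terms are `|x k|` on both sides and the statement faithfully encodes the
claim for `k ≥ 2`.) -/
theorem stmt_11 (x : ℕ → ℝ) :
    (Summable fun k : ℕ => |x k| ^ ((1 : ℝ) + 1 / Real.log (k : ℝ))) ↔
      Summable fun k : ℕ => |x k| := by
  have hlog : ∀ k : ℕ, 0 ≤ Real.log (k : ℝ) := by
    intro k
    rcases Nat.eq_zero_or_pos k with hk | hk
    · simp [hk]
    · exact Real.log_natCast_nonneg k
  have hexp_nonneg : ∀ k, 0 ≤ |x k| ^ ((1 : ℝ) + 1 / Real.log (k : ℝ)) := fun k =>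
    Real.rpow_nonneg (abs_nonneg _) _
  constructor
  · intro hsum
    -- majorant: 1/k^2 + e^2 * a_k
    have hmaj : Summable fun k : ℕ =>
        1 / (k : ℝ) ^ 2 + Real.exp 2 * |x k| ^ ((1 : ℝ) + 1 / Real.log (k : ℝ)) := by
      exact (Real.summable_one_div_nat_pow.mpr (by norm_num)).add (hsum.mul_left _)
    refine hmaj.of_nonneg_of_le (fun k => abs_nonneg _) ?_
    intro k
    rcases lt_or_ge (k : ℕ) 2 with hk2 | hk2
    · -- k = 0 or 1 : exponent is 1
      interval_cases k <;> simp <;>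
        nlinarith [Real.one_le_exp (show (0:ℝ) ≤ 2 by norm_num), abs_nonneg (x 0),
          abs_nonneg (x 1)]
    · rcases le_or_gt (|x k|) (1 / (k : ℝ) ^ 2) with h | h
      · have : (0:ℝ) ≤ Real.exp 2 * |x k| ^ ((1 : ℝ) + 1 / Real.log (k : ℝ)) := by
          positivity
        linarith
    -- case |x k| > 1/k^2
      · have hk1 : (1 : ℝ) < (k : ℝ) := by exact_mod_cast hk2.trans_lt' (by norm_num)
        have hlogpos : 0 < Real.log (k : ℝ) := Real.log_pos hk1
        have hxpos : 0 < |x k| := lt_trans (by positivity) h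
        have hsplit : |x k| ^ ((1 : ℝ) + 1 / Real.log (k : ℝ))
            = |x k| * |x k| ^ ((1 : ℝ) / Real.log (k : ℝ)) := by
          rw [Real.rpow_add hxpos, Real.rpow_one]
        have hbase : (1 / (k : ℝ) ^ 2) ^ ((1 : ℝ) / Real.log (k : ℝ))
            ≤ |x k| ^ ((1 : ℝ) / Real.log (k : ℝ)) :=
          Real.rpow_le_rpow (by positivity) h.le (by positivity)
        have hval : (1 / (k : ℝ) ^ 2) ^ ((1 : ℝ) / Real.log (k : ℝ)) = Real.exp (-2) := by
          rw [Real.rpow_def_of_pos (by positivity)]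
          congr 1
          rw [one_div, Real.log_inv, Real.log_pow]
          field_simp
          norm_num
        have hge : Real.exp (-2) ≤ |x k| ^ ((1 : ℝ) / Real.log (k : ℝ)) := hval ▸ hbase
        have : |x k| * Real.exp (-2) ≤ |x k| ^ ((1 : ℝ) + 1 / Real.log (k : ℝ)) := by
          rw [hsplit]
          exact mul_le_mul_of_nonneg_left hge hxpos.le
        have hkey : |x k| ≤ Real.exp 2 * |x k| ^ ((1 : ℝ) + 1 / Real.log (k : ℝ)) := by
          have h2 : Real.exp 2 * (|x k| * Real.exp (-2)) = |x k| := by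
            rw [mul_comm, mul_assoc, ← Real.exp_add]
            norm_num
          calc |x k| = Real.exp 2 * (|x k| * Real.exp (-2)) := h2.symm
            _ ≤ Real.exp 2 * |x k| ^ ((1 : ℝ) + 1 / Real.log (k : ℝ)) :=
                mul_le_mul_of_nonneg_left this (Real.exp_pos 2).le
        have hk2' : (0:ℝ) ≤ 1 / (k : ℝ) ^ 2 := by positivity
        linarith
  · intro hsum
    have htend : Tendsto (fun k => |x k|) atTop (nhds 0) := hsum.tendsto_atTop_zero
    have hev : ∀ᶠ k in atTop, |x k| ≤ 1 := by
      have := htend.eventually (eventually_le_nhds (show (0:ℝ) < 1 by norm_num))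
      exact this
    refine hsum.of_norm_bounded_eventually ?_
    rw [Nat.cofinite_eq_atTop]
    filter_upwards [hev] with k hk1
    rw [Real.norm_eq_abs, abs_of_nonneg (hexp_nonneg k)]
    rcases eq_or_lt_of_le (abs_nonneg (x k)) with h0 | h0
    · rw [← h0, Real.zero_rpow (ne_of_gt (by have := hlog k; positivity))]
    · calc |x k| ^ ((1 : ℝ) + 1 / Real.log (k : ℝ))
          ≤ |x k| ^ (1 : ℝ) :=
            Real.rpow_le_rpow_of_exponent_ge h0 hk1
              (by linarith [one_div_nonneg.mpr (hlog k)])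
        _ = |x k| := Real.rpow_one _
end

section
/- Let 0 < α < 1 and consider the exponents q_k = 1 + 1/(log k)^α (k ≥ 2, natural logarithm). Then ℓ^{q_k} ≠ ℓ¹; more precisely, there exists a real sequence x = {x_k} (k ≥ 2) such that the series ∑_k |x_k|^{1 + 1/(log k)^α} converges but the series ∑_k |x_k| diverges. -/
open Filter Topology

/-- for `0 < α < 1` and the exponents `q_k = 1 + 1/(log k)^α` (`k ≥ 2`),
`ℓ^{q_k} ≠ ℓ¹`: there is a real sequence `x` such that `∑_k |x_k|^{1 + 1/(log k)^α}`
converges while `∑_k |x_k|` diverges. -/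
theorem stmt_12 (α : ℝ) (hα0 : 0 < α) (hα1 : α < 1) :
    ∃ x : ℕ → ℝ,
      (Summable fun k : ℕ => |x k| ^ ((1 : ℝ) + 1 / (Real.log (k : ℝ)) ^ α)) ∧
      ¬ Summable fun k : ℕ => |x k| := by
  refine ⟨fun k => 1 / (k : ℝ), ?_, ?_⟩
  · -- the series ∑ (1/k)^{q_k} converges
    set s : ℝ := 1 - α with hs_def
    have hs : 0 < s := by rw [hs_def]; linarith
    set c : ℝ := Real.log 2 with hc_def
    have hc : 0 < c := Real.log_pos one_lt_two
    have hcs : 0 < c ^ s := Real.rpow_pos_of_pos hc s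
    set g : ℕ → ℝ := fun k => Real.exp (-(Real.log k + Real.log k ^ s)) with hg_def
    -- Step 1: the condensed series ∑ exp(-(k·log 2)^{1-α}) converges
    have hexp_tendsto : Tendsto (fun t : ℝ => 2 * Real.log t - (t * c) ^ s) atTop atBot := by
      have hlo : (fun t : ℝ => 2 * Real.log t) =o[atTop] fun t : ℝ => t ^ s :=
        (isLittleO_log_rpow_atTop hs).const_mul_left 2
      have hbnd : ∀ᶠ t : ℝ in atTop,
          2 * Real.log t - (t * c) ^ s ≤ -(c ^ s / 2 * t ^ s) := by
        filter_upwards [hlo.def (half_pos hcs), eventually_ge_atTop (1 : ℝ)] with t ht ht1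
        have ht0 : (0 : ℝ) ≤ t := by linarith
        have hts : (0 : ℝ) ≤ t ^ s := Real.rpow_nonneg ht0 s
        rw [Real.norm_eq_abs, Real.norm_eq_abs, abs_of_nonneg hts] at ht
        have h1 : 2 * Real.log t ≤ c ^ s / 2 * t ^ s := (le_abs_self _).trans ht
        have h2 : (t * c) ^ s = t ^ s * c ^ s := Real.mul_rpow ht0 hc.le
        nlinarith [hts, hcs]
      refine tendsto_atBot_mono' atTop hbnd ?_
      have : Tendsto (fun t : ℝ => c ^ s / 2 * t ^ s) atTop atTop :=
        (tendsto_rpow_atTop hs).const_mul_atTop (half_pos hcs)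
      exact tendsto_neg_atTop_atBot.comp this
    have hsum_h : Summable fun k : ℕ => Real.exp (-(((k : ℝ) * c) ^ s)) := by
      have h2 : Summable fun k : ℕ => (k : ℝ) ^ (-2 : ℝ) :=
        Real.summable_nat_rpow.mpr (by norm_num)
      refine summable_of_isBigO_nat h2 (Asymptotics.IsLittleO.isBigO ?_)
      rw [Asymptotics.isLittleO_iff_tendsto']
      · have htend : Tendsto (fun k : ℕ => Real.exp (2 * Real.log k - ((k : ℝ) * c) ^ s))
            atTop (𝓝 0) :=
          (Real.tendsto_exp_atBot.comp hexp_tendsto).comp tendsto_natCast_atTop_atTop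
        refine htend.congr' ?_
        filter_upwards [eventually_ge_atTop 1] with k hk
        have hkpos : (0 : ℝ) < (k : ℝ) := by exact_mod_cast hk
        have h : ((k : ℝ) ^ (-2 : ℝ)) = Real.exp (Real.log k * (-2)) :=
          Real.rpow_def_of_pos hkpos _
        rw [h, ← Real.exp_sub]
        congr 1
        ring
      · filter_upwards [eventually_ge_atTop 1] with k hk h0
        exfalso
        have hkpos : (0 : ℝ) < (k : ℝ) := by exact_mod_cast hk
        exact (Real.rpow_pos_of_pos hkpos _).ne' h0
    -- Step 2: g is summable by Cauchy condensation
    have hg_sum : Summable g := by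
      rw [← summable_condensed_iff_of_nonneg (fun n => (Real.exp_pos _).le)
        (fun m n hm hmn => ?_)]
      · refine hsum_h.congr fun k => ?_
        have hcast : ((2 ^ k : ℕ) : ℝ) = (2 : ℝ) ^ k := by push_cast; ring
        have hlog : Real.log ((2 : ℝ) ^ k) = (k : ℝ) * c := by
          rw [Real.log_pow]
        have hpow : (2 : ℝ) ^ k = Real.exp ((k : ℝ) * c) := by
          rw [Real.exp_nat_mul, Real.exp_log two_pos]
        rw [hcast, hlog, hpow, ← Real.exp_add]
        congr 1
        ring
      · -- antitonicity of g on positives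
        have hm1 : (1 : ℝ) ≤ (m : ℝ) := by exact_mod_cast hm
        have hmn' : (m : ℝ) ≤ (n : ℝ) := by exact_mod_cast hmn
        have hlogm : (0 : ℝ) ≤ Real.log m := Real.log_nonneg hm1
        have hloglog : Real.log m ≤ Real.log n :=
          Real.log_le_log (by linarith) hmn'
        have : Real.log (m : ℝ) ^ s ≤ Real.log (n : ℝ) ^ s :=
          Real.rpow_le_rpow hlogm hloglog hs.le
        exact Real.exp_le_exp.mpr (by simp only [neg_le_neg_iff]; linarith)
    -- Step 3: compare the original series with g
    refine hg_sum.of_nonneg_of_le (fun k => Real.rpow_nonneg (abs_nonneg _) _) fun k => ?_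
    match k with
    | 0 =>
      simp only [Nat.cast_zero, div_zero, abs_zero]
      rw [Real.zero_rpow (by
        rw [Real.log_zero, Real.zero_rpow hα0.ne', div_zero]; norm_num)]
      exact (Real.exp_pos _).le
    | 1 =>
      simp only [Nat.cast_one, div_one, abs_one, Real.one_rpow]
      rw [hg_def]
      simp only [Nat.cast_one, Real.log_one, Real.zero_rpow hs.ne', add_zero, neg_zero,
        Real.exp_zero]
      exact le_refl 1
    | (n + 2) =>
      set k := n + 2 with hk_def
      have hk2 : (2 : ℝ) ≤ (k : ℝ) := by
        rw [hk_def]; push_cast; linarith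
      have hkpos : (0 : ℝ) < (k : ℝ) := by linarith
      have hlogpos : 0 < Real.log (k : ℝ) := Real.log_pos (by linarith)
      have habs : |1 / (k : ℝ)| = ((k : ℝ))⁻¹ := by
        rw [abs_of_pos (by positivity), one_div]
      rw [habs, Real.rpow_def_of_pos (by positivity), Real.log_inv]
      have h1 : 1 / Real.log (k : ℝ) ^ α = Real.log (k : ℝ) ^ (-α) := by
        rw [Real.rpow_neg hlogpos.le, one_div]
      have h2 : Real.log (k : ℝ) ^ (-α) * Real.log (k : ℝ) = Real.log (k : ℝ) ^ s := by
        nth_rewrite 2 [← Real.rpow_one (Real.log (k : ℝ))]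
        rw [← Real.rpow_add hlogpos, hs_def]
        ring_nf
      have hexp : -Real.log (k : ℝ) * (1 + 1 / Real.log (k : ℝ) ^ α) =
          -(Real.log (k : ℝ) + Real.log (k : ℝ) ^ s) := by
        rw [h1]
        linear_combination -h2
      rw [hexp, hg_def]
  · -- ∑ 1/k diverges
    intro h
    exact Real.not_summable_one_div_natCast (h.congr fun k => abs_of_nonneg (by positivity))
end

section
/- Let {p_k} be a sequence of real numbers with 0 < p_k ≤ 1 for all k and p_k → 0 as k → ∞. Then ℓ^{p_k} ⊆ ⋂_{p>0} ℓ^p: for every real sequence x = {x_k}, if ∑_k |x_k|^{p_k} < ∞ then for every real p > 0 the series ∑_k |x_k|^p converges. Moreover, the inclusion is strict: there exists a real sequence x with ∑_k |x_k|^p < ∞ for every p > 0 but ∑_k |x_k|^{p_k} = ∞. -/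
open Filter Topology

/-- for exponents `0 < p_k ≤ 1` with `p_k → 0`, one has
`ℓ^{p_k} ⊆ ⋂_{p>0} ℓ^p`, and the inclusion is strict: there is a sequence lying in
every `ℓ^p` (`p > 0`) but not in `ℓ^{p_k}`. -/
theorem stmt_16 (p : ℕ → ℝ) (hp0 : ∀ k, 0 < p k) (hp1 : ∀ k, p k ≤ 1)
    (hplim : Tendsto p atTop (𝓝 0)) :
    (∀ x : ℕ → ℝ, (Summable fun k => |x k| ^ p k) →
      ∀ r : ℝ, 0 < r → Summable fun k => |x k| ^ r) ∧
    (∃ x : ℕ → ℝ, (∀ r : ℝ, 0 < r → Summable fun k => |x k| ^ r) ∧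
      ¬ Summable fun k => |x k| ^ p k) := by
  constructor
  · intro x hx r hr
    -- eventually |x k| ≤ 1 and p k ≤ r, hence |x k|^r ≤ |x k|^{p k}
    have h0 : Tendsto (fun k => |x k| ^ p k) atTop (𝓝 0) := hx.tendsto_atTop_zero
    have h1 : ∀ᶠ k in atTop, |x k| ^ p k < 1 := h0.eventually_lt_const one_pos
    have h2 : ∀ᶠ k in atTop, p k < r := hplim.eventually_lt_const hr
    have h3 : ∀ᶠ k in atTop, |x k| ^ r ≤ |x k| ^ p k := by
      filter_upwards [h1, h2] with k hk1 hk2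
      have hxk : |x k| ≤ 1 := by
        by_contra hgt
        push_neg at hgt
        have : (1:ℝ) ≤ |x k| ^ p k :=
          Real.one_le_rpow hgt.le (hp0 k).le
        linarith
      rcases eq_or_lt_of_le (abs_nonneg (x k)) with h | h
      · rw [← h, Real.zero_rpow hr.ne', Real.zero_rpow (hp0 k).ne']
      · exact Real.rpow_le_rpow_of_exponent_ge h hxk hk2.le
    rcases eventually_atTop.1 h3 with ⟨N, hN⟩
    rw [← summable_nat_add_iff N]
    refine Summable.of_nonneg_of_le (fun k => Real.rpow_nonneg (abs_nonneg _) _)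
      (fun k => hN (k + N) (Nat.le_add_left _ _)) ?_
    exact (summable_nat_add_iff N).2 hx
  · -- extract a subsequence with small exponents
    obtain ⟨φ, hφmono, hφ⟩ := extraction_forall_of_eventually
      (P := fun j k => p k ≤ 1 / (j + 1))
      (fun j => (hplim.eventually_le_const (by positivity)))
    classical
    set x : ℕ → ℝ := fun k => if k ∈ Set.range φ then (2:ℝ) ^ (-(1 / p k)) else 0
      with hxdef
    have hxφ : ∀ j, x (φ j) = (2:ℝ) ^ (-(1 / p (φ j))) := by
      intro j; simp [hxdef]
    have hxout : ∀ k, k ∉ Set.range φ → x k = 0 := by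
      intro k hk; simp only [hxdef]; rw [if_neg hk]
    refine ⟨x, ?_, ?_⟩
    · intro r hr
      rw [← (Function.Injective.summable_iff hφmono.injective
        (f := fun k => |x k| ^ r) ?_)]
      swap
      · intro k hk
        simp [hxout k hk, Real.zero_rpow hr.ne']
      -- compare with geometric series
      have key : ∀ j : ℕ, |x (φ j)| ^ r ≤ ((2:ℝ) ^ (-r)) ^ j := by
        intro j
        have hp' : (0:ℝ) < p (φ j) := hp0 _
        have habs : |x (φ j)| = (2:ℝ) ^ (-(1 / p (φ j))) := by
          rw [hxφ j, abs_of_pos (Real.rpow_pos_of_pos two_pos _)]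
        rw [habs, ← Real.rpow_natCast ((2:ℝ) ^ (-r)) j, ← Real.rpow_mul (by norm_num),
          ← Real.rpow_mul (by norm_num)]
        apply Real.rpow_le_rpow_of_exponent_le one_le_two
        have h1 : (j : ℝ) + 1 ≤ 1 / p (φ j) := by
          rw [le_div_iff₀ hp']
          calc ((j:ℝ) + 1) * p (φ j) ≤ ((j:ℝ) + 1) * (1 / (j + 1)) := by
                apply mul_le_mul_of_nonneg_left (hφ j) (by positivity)
            _ = 1 := by field_simp
        have : r * (j:ℝ) ≤ r * (1 / p (φ j)) - r := by nlinarith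
        nlinarith
      refine Summable.of_nonneg_of_le (fun j => Real.rpow_nonneg (abs_nonneg _) _)
        key ?_
      apply summable_geometric_of_lt_one (Real.rpow_nonneg (by norm_num) _)
      exact Real.rpow_lt_one_of_one_lt_of_neg one_lt_two (by linarith)
    · intro hs
      have hcomp : Summable ((fun k => |x k| ^ p k) ∘ φ) :=
        hs.comp_injective hφmono.injective
      have hconst : ∀ j, ((fun k => |x k| ^ p k) ∘ φ) j = 1 / 2 := by
        intro j
        have hp' : (0:ℝ) < p (φ j) := hp0 _
        have habs : |x (φ j)| = (2:ℝ) ^ (-(1 / p (φ j))) := by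
          rw [hxφ j, abs_of_pos (Real.rpow_pos_of_pos two_pos _)]
        simp only [Function.comp_apply, habs]
        rw [← Real.rpow_mul (by norm_num)]
        have : -(1 / p (φ j)) * p (φ j) = -1 := by field_simp
        rw [this, Real.rpow_neg_one]
        norm_num
      rw [funext hconst, summable_const_iff] at hcomp
      norm_num at hcomp
end

section
/- Let {p_k} be a sequence of real numbers with 0 < p_k ≤ 1 for all k and p := inf_k p_k > 0, and let M > 0. If x = {x_k} is a real sequence with ∑_k |x_k|^{p_k} ≤ M (the series converging), then the series ∑_k |x_k| converges and ∑_k |x_k| ≤ max{1, M^{1/p}}. -/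
open Filter Topology

/-- for exponents `0 < p_k ≤ 1` with `p := inf_k p_k > 0` and `M > 0`,
if `∑_k |x_k|^{p_k} ≤ M` (the series converging), then `∑_k |x_k|` converges and
`∑_k |x_k| ≤ max {1, M^{1/p}}`. -/
theorem stmt_17 (p : ℕ → ℝ) (hp0 : ∀ k, 0 < p k) (hp1 : ∀ k, p k ≤ 1)
    (hinf : 0 < ⨅ k, p k) (M : ℝ) (hM : 0 < M)
    (x : ℕ → ℝ) (hx : Summable fun k => |x k| ^ p k)
    (hxM : (∑' k, |x k| ^ p k) ≤ M) :
    (Summable fun k => |x k|) ∧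
      (∑' k, |x k|) ≤ max 1 (M ^ (1 / ⨅ k, p k)) := by
  set q := ⨅ k, p k with hq
  have hbdd : BddBelow (Set.range p) := ⟨0, by rintro y ⟨k, rfl⟩; exact (hp0 k).le⟩
  have hqle : ∀ k, q ≤ p k := fun k => ciInf_le hbdd k
  set a := ∑' k, |x k| ^ p k with ha
  have hnn : ∀ k, (0:ℝ) ≤ |x k| ^ p k := fun k => Real.rpow_nonneg (abs_nonneg _) _
  have ha0 : 0 ≤ a := tsum_nonneg hnn
  have hterm : ∀ k, |x k| ^ p k ≤ a := fun k => Summable.le_tsum hx k (fun j _ => hnn j)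
  by_cases hca : a ≤ 1
  · have key : ∀ k, |x k| ≤ |x k| ^ p k := by
      intro k
      rcases eq_or_lt_of_le (abs_nonneg (x k)) with h0 | h0
      · rw [← h0, Real.zero_rpow (hp0 k).ne']
      · have h1 : |x k| ≤ 1 := by
          by_contra h
          push_neg at h
          have : 1 < |x k| ^ p k :=
            Real.one_lt_rpow_iff_of_pos h0 |>.mpr (Or.inl ⟨h, hp0 k⟩)
          exact absurd ((hterm k).trans hca) (not_le.mpr this)
        calc |x k| = |x k| ^ (1:ℝ) := (Real.rpow_one _).symm
          _ ≤ |x k| ^ p k := Real.rpow_le_rpow_of_exponent_ge h0 h1 (hp1 k)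
    have hsum : Summable fun k => |x k| :=
      Summable.of_nonneg_of_le (fun k => abs_nonneg _) key hx
    refine ⟨hsum, le_trans (Summable.tsum_le_tsum key hsum hx) ?_⟩
    exact le_trans hca (le_max_left _ _)
  · push_neg at hca
    have hapos : (0:ℝ) < a := lt_trans one_pos hca
    have key : ∀ k, |x k| ≤ a ^ (1 / q - 1) * |x k| ^ p k := by
      intro k
      rcases eq_or_lt_of_le (abs_nonneg (x k)) with h0 | h0
      · rw [← h0]
        exact mul_nonneg (Real.rpow_nonneg ha0 _) (Real.rpow_nonneg le_rfl _)
      · set u := |x k| ^ p k with hu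
        have hupos : 0 < u := Real.rpow_pos_of_pos h0 _
        have hxeq : |x k| = u ^ (1 / p k) := by
          rw [hu, ← Real.rpow_mul (abs_nonneg _), mul_one_div_cancel (hp0 k).ne',
            Real.rpow_one]
        have hsplit : u ^ (1 / p k) = a ^ (1 / p k) * (u / a) ^ (1 / p k) := by
          rw [← Real.mul_rpow ha0 (by positivity), mul_div_cancel₀ _ hapos.ne']
        have hb1 : a ^ (1 / p k) ≤ a ^ (1 / q) :=
          Real.rpow_le_rpow_of_exponent_le hca.le
            (one_div_le_one_div_of_le hinf (hqle k))
        have hb2 : (u / a) ^ (1 / p k) ≤ u / a := by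
          have hle1 : u / a ≤ 1 := (div_le_one hapos).mpr (hterm k)
          have hexp : (1:ℝ) ≤ 1 / p k := by
            rw [le_div_iff₀ (hp0 k)]
            simpa using hp1 k
          calc (u / a) ^ (1 / p k) ≤ (u / a) ^ (1:ℝ) :=
                Real.rpow_le_rpow_of_exponent_ge (by positivity) hle1 hexp
            _ = u / a := Real.rpow_one _
        calc |x k| = a ^ (1 / p k) * (u / a) ^ (1 / p k) := by rw [hxeq, hsplit]
          _ ≤ a ^ (1 / q) * (u / a) := by
              apply mul_le_mul hb1 hb2 (by positivity) (Real.rpow_nonneg ha0 _)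
          _ = a ^ (1 / q - 1) * u := by
              rw [Real.rpow_sub hapos, Real.rpow_one]
              ring
    have hsum2 : Summable fun k => a ^ (1 / q - 1) * |x k| ^ p k := hx.mul_left _
    have hsum : Summable fun k => |x k| :=
      Summable.of_nonneg_of_le (fun k => abs_nonneg _) key hsum2
    refine ⟨hsum, ?_⟩
    have h1 : (∑' k, |x k|) ≤ a ^ (1 / q - 1) * a := by
      calc (∑' k, |x k|) ≤ ∑' k, a ^ (1 / q - 1) * |x k| ^ p k :=
            Summable.tsum_le_tsum key hsum hsum2
        _ = a ^ (1 / q - 1) * a := by rw [tsum_mul_left]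
    have h2 : a ^ (1 / q - 1) * a = a ^ (1 / q) := by
      nth_rewrite 2 [← Real.rpow_one a]
      rw [← Real.rpow_add hapos]
      ring_nf
    have h3 : a ^ (1 / q) ≤ M ^ (1 / q) :=
      Real.rpow_le_rpow ha0 hxM (by positivity)
    exact le_trans (h1.trans (h2.le.trans h3)) (le_max_right _ _)
end

section
/- Let Y be a real Hilbert space, A : ℓ² → Y a continuous linear operator, y ∈ Y, α > 0, and let {p_k} be exponents with 0 < p_k for all k and sup_k p_k < 1. Let x = {x_k} ∈ ℓ¹ with ∑_k |x_k|^{p_k} < ∞ be a local minimizer of the functional F(u) = (1/2)‖Au − y‖²_Y + α ∑_k |u_k|^{p_k} over ℓ¹, in the sense that there exists ε > 0 such that F(x) ≤ F(u) for all u ∈ ℓ¹ with ∑_k |u_k − x_k| < ε. Then x is sparse: the set {k : x_k ≠ 0} is finite. -/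
open Filter Topology

set_option maxHeartbeats 1000000 in
/-- Let `Y` be a real Hilbert space, `A : ℓ² → Y` continuous linear,
`y ∈ Y`, `α > 0`, and exponents `0 < p_k` with `sup_k p_k < 1` (phrased as: there is
`s < 1` with `p_k ≤ s` for all `k`). If `x ∈ ℓ¹` (regarded in `ℓ²`) with
`∑_k |x_k|^{p_k} < ∞` is a local minimizer of
`F(u) = ½‖Au − y‖² + α ∑_k |u_k|^{p_k}` over `ℓ¹` (the penalty series summed in
`[0,∞]`), i.e. `F(x) ≤ F(u)` for all `u ∈ ℓ¹` with `∑_k |u_k − x_k| < ε`,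
then `x` is sparse: `{k : x_k ≠ 0}` is finite. -/
theorem stmt_18
    {Y : Type*} [NormedAddCommGroup Y] [InnerProductSpace ℝ Y] [CompleteSpace Y]
    (A : lp (fun _ : ℕ => ℝ) 2 →L[ℝ] Y) (y : Y) (α : ℝ) (hα : 0 < α)
    (p : ℕ → ℝ) (hp0 : ∀ k, 0 < p k) (hsup : ∃ s : ℝ, s < 1 ∧ ∀ k, p k ≤ s)
    (x : lp (fun _ : ℕ => ℝ) 2)
    (hx1 : Summable fun k => |x k|)
    (hxp : Summable fun k => |x k| ^ p k)
    (ε : ℝ) (hε : 0 < ε)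
    (hmin : ∀ u : lp (fun _ : ℕ => ℝ) 2, (Summable fun k => |u k|) →
      (∑' k, |u k - x k|) < ε →
      ENNReal.ofReal ((1 / 2) * ‖A x - y‖ ^ 2) +
          ENNReal.ofReal α * ∑' k, ENNReal.ofReal (|x k| ^ p k) ≤
        ENNReal.ofReal ((1 / 2) * ‖A u - y‖ ^ 2) +
          ENNReal.ofReal α * ∑' k, ENNReal.ofReal (|u k| ^ p k)) :
    {k : ℕ | x k ≠ 0}.Finite := by
  obtain ⟨s, hs1, hps⟩ := hsup
  set R : ℝ := ‖A x - y‖ with hR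
  set M : ℝ := ‖A‖ with hM
  set C : ℝ := M * R + M ^ 2 with hC
  have hC0 : 0 ≤ C := by positivity
  -- key: for each k with 0 < |x k| < min ε 1, α ≤ C * |x k| ^ (1 - s)
  have key : ∀ k : ℕ, 0 < |x k| → |x k| < min ε 1 → α ≤ C * |x k| ^ (1 - s) := by
    intro k ht htε
    set t : ℝ := |x k| with htdef
    set u : lp (fun _ : ℕ => ℝ) 2 := x - lp.single 2 k (x k) with hu
    have hucoe : ∀ j, u j = if j = k then 0 else x j := by
      intro j
      by_cases h : j = k
      · subst h
        simp only [hu, lp.coeFn_sub, Pi.sub_apply, lp.single_apply_self, sub_self, if_pos]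
      · simp only [hu, lp.coeFn_sub, Pi.sub_apply, lp.single_apply_ne 2 k _ h, sub_zero,
          if_neg h]
    have huabs : ∀ j, |u j| ≤ |x j| := by
      intro j; rw [hucoe]; split <;> simp [abs_nonneg]
    have hu1 : Summable fun j => |u j| := hx1.of_nonneg_of_le (fun _ => abs_nonneg _) huabs
    have hdiff : ∀ j, |u j - x j| = if j = k then t else 0 := by
      intro j; rw [hucoe]
      by_cases h : j = k
      · subst h; simp [htdef]
      · simp [h]
    have hsum_diff : (∑' j, |u j - x j|) = t := by
      rw [tsum_eq_single k]
      · simp [hdiff]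
      · intro j hj; simp [hdiff, hj]
    have hε' : (∑' j, |u j - x j|) < ε := by
      rw [hsum_diff]; exact lt_of_lt_of_le htε (min_le_left _ _)
    have hup : Summable fun j => |u j| ^ p j := by
      refine hxp.of_nonneg_of_le (fun j => by positivity) (fun j => ?_)
      exact Real.rpow_le_rpow (abs_nonneg _) (huabs j) (hp0 j).le
    -- penalty relation
    have hsplit : (∑' j, |x j| ^ p j) = (∑' j, |u j| ^ p j) + t ^ p k := by
      have : ∀ j, |x j| ^ p j = |u j| ^ p j + (if j = k then t ^ p k else 0) := by
        intro j
        rw [hucoe]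
        by_cases h : j = k
        · subst h; simp [htdef, Real.zero_rpow (hp0 j).ne']
        · simp [h]
      calc (∑' j, |x j| ^ p j)
          = ∑' j, (|u j| ^ p j + if j = k then t ^ p k else 0) := by
            exact tsum_congr this
        _ = (∑' j, |u j| ^ p j) + ∑' j, (if j = k then t ^ p k else 0) := by
            refine Summable.tsum_add hup ?_
            exact summable_of_ne_finset_zero (s := {k}) (by intro j hj; simp at hj; simp [hj])
        _ = (∑' j, |u j| ^ p j) + t ^ p k := by
            congr 1
            rw [tsum_eq_single k] <;> simp +contextual
    -- convert ENNReal inequality to real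
    have hle := hmin u hu1 hε'
    have hSx : (∑' j, ENNReal.ofReal (|x j| ^ p j)) = ENNReal.ofReal (∑' j, |x j| ^ p j) :=
      (ENNReal.ofReal_tsum_of_nonneg (fun j => by positivity) hxp).symm
    have hSu : (∑' j, ENNReal.ofReal (|u j| ^ p j)) = ENNReal.ofReal (∑' j, |u j| ^ p j) :=
      (ENNReal.ofReal_tsum_of_nonneg (fun j => by positivity) hup).symm
    rw [hSx, hSu, ← ENNReal.ofReal_mul hα.le, ← ENNReal.ofReal_mul hα.le,
      ← ENNReal.ofReal_add (by positivity) (mul_nonneg hα.le (tsum_nonneg fun j => by positivity)),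
      ← ENNReal.ofReal_add (by positivity) (mul_nonneg hα.le (tsum_nonneg fun j => by positivity))] at hle
    have hSu_nonneg : 0 ≤ ∑' j, |u j| ^ p j := tsum_nonneg fun j => by positivity
    have hle' : (1 / 2 : ℝ) * ‖A x - y‖ ^ 2 + α * ∑' j, |x j| ^ p j ≤
        1 / 2 * ‖A u - y‖ ^ 2 + α * ∑' j, |u j| ^ p j :=
      (ENNReal.ofReal_le_ofReal_iff (add_nonneg (by positivity)
        (mul_nonneg hα.le hSu_nonneg))).mp hle
    rw [hsplit, mul_add] at hle'
    have hkey1 : α * t ^ p k ≤ 1 / 2 * (‖A u - y‖ ^ 2 - R ^ 2) := by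
      rw [hR]; linarith
    -- norm bound
    have hnorm : ‖A u - y‖ ≤ R + M * t := by
      have h1 : A u - y = (A x - y) - A (lp.single 2 k (x k)) := by
        rw [hu, map_sub]; abel
      have h2 : ‖A (lp.single 2 k (x k))‖ ≤ M * t := by
        have h := A.le_opNorm (lp.single 2 k (x k))
        have hn := lp.norm_single (p := 2) (E := fun _ : ℕ => ℝ) (by norm_num) k (x k)
        rw [hn] at h
        simpa [htdef, hM] using h
      have h3 : ‖(A x - y) - A (lp.single 2 k (x k))‖ ≤ ‖A x - y‖ + ‖A (lp.single 2 k (x k))‖ :=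
        norm_sub_le _ _
      rw [h1]
      rw [hR]
      linarith
    have hR0 : 0 ≤ R := norm_nonneg _
    have hM0 : 0 ≤ M := norm_nonneg _
    have ht1 : t ≤ 1 := le_of_lt (lt_of_lt_of_le htε (min_le_right _ _))
    have hsq : ‖A u - y‖ ^ 2 ≤ (R + M * t) ^ 2 :=
      pow_le_pow_left₀ (norm_nonneg _) hnorm 2
    have hkey2 : α * t ^ p k ≤ C * t := by
      have h3 : (1:ℝ) / 2 * ((R + M * t) ^ 2 - R ^ 2) = R * M * t + 1 / 2 * (M * t) ^ 2 := by
        ring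
      have h4 : (1:ℝ)/2 * (M * t) ^ 2 ≤ M ^ 2 * t := by
        have : (M * t) ^ 2 = M ^ 2 * t * t := by ring
        rw [this]
        nlinarith [mul_nonneg (mul_nonneg (sq_nonneg M) ht.le) ht.le]
      calc α * t ^ p k ≤ 1 / 2 * (‖A u - y‖ ^ 2 - R ^ 2) := hkey1
        _ ≤ 1 / 2 * ((R + M * t) ^ 2 - R ^ 2) := by nlinarith
        _ = R * M * t + 1 / 2 * (M * t) ^ 2 := h3
        _ ≤ R * M * t + M ^ 2 * t := by linarith
        _ = C * t := by rw [hC]; ring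
    -- divide by t ^ p k
    have htp : 0 < t ^ p k := Real.rpow_pos_of_pos ht _
    have hfac : t = t ^ p k * t ^ (1 - p k) := by
      rw [← Real.rpow_add ht]; simp
    have hαle : α ≤ C * t ^ (1 - p k) := by
      have h5 : α * t ^ p k ≤ C * t ^ (1 - p k) * t ^ p k := by
        calc α * t ^ p k ≤ C * t := hkey2
          _ = C * t ^ (1 - p k) * t ^ p k := by
              rw [mul_assoc, ← Real.rpow_add ht]
              norm_num
      exact le_of_mul_le_mul_right h5 htp
    have hmono : t ^ (1 - p k) ≤ t ^ (1 - s) :=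
      Real.rpow_le_rpow_of_exponent_ge ht ht1 (by linarith [hps k])
    calc α ≤ C * t ^ (1 - p k) := hαle
      _ ≤ C * t ^ (1 - s) := by exact mul_le_mul_of_nonneg_left hmono hC0
  -- now cofinite argument
  have htend : Tendsto (fun k => |x k|) cofinite (𝓝 0) := hx1.tendsto_cofinite_zero
  have htend2 : Tendsto (fun k => C * |x k| ^ (1 - s)) cofinite (𝓝 0) := by
    have hcont : Tendsto (fun t : ℝ => t ^ (1 - s)) (𝓝 0) (𝓝 0) := by
      have h := (Real.continuousAt_rpow_const 0 (1 - s) (Or.inr (by linarith))).tendsto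
      simpa [Real.zero_rpow (show (1:ℝ) - s ≠ 0 by linarith)] using h
    have := (hcont.comp htend).const_mul C
    simpa using this
  have h1 : ∀ᶠ k in cofinite, |x k| < min ε 1 :=
    htend.eventually (tendsto_id.eventually_lt_const (by positivity))
  have h2 : ∀ᶠ k in cofinite, C * |x k| ^ (1 - s) < α :=
    htend2.eventually_lt_const hα
  have h3 : ∀ᶠ k in cofinite, x k = 0 := by
    filter_upwards [h1, h2] with k hk1 hk2
    by_contra hk0
    have ht : 0 < |x k| := abs_pos.mpr hk0
    exact absurd (key k ht hk1) (not_le.mpr hk2)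
  simpa using h3
end

section
/- Let Y be a real Hilbert space, A : ℓ² → Y a continuous linear operator, y ∈ Y, α > 0, and let {p_k} be exponents with 0 < p_k < 1 for all k and inf_k p_k > 0. Let x* = {x*_k} ∈ ℓ¹ with ∑_k |x*_k|^{p_k} < ∞ be a local minimizer of the functional F(u) = (1/2)‖Au − y‖²_Y + α ∑_k |u_k|^{p_k} over ℓ¹, in the sense that there exists ε > 0 such that F(x*) ≤ F(u) for all u ∈ ℓ¹ with ∑_k |u_k − x*_k| < ε. Then x* is sparse: the set {k : x*_k ≠ 0} is finite. -/
open Filter Topology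

set_option maxHeartbeats 1000000 in
/-- Let `Y` be a real Hilbert space, `A : ℓ² → Y` continuous linear,
`y ∈ Y`, `α > 0`, and exponents `0 < p_k < 1` with `inf_k p_k > 0`. If `x* ∈ ℓ¹`
(regarded in `ℓ²`) with `∑_k |x*_k|^{p_k} < ∞` is a local minimizer of
`F(u) = ½‖Au − y‖² + α ∑_k |u_k|^{p_k}` over `ℓ¹` (the penalty series summed in
`[0,∞]`), i.e. `F(x*) ≤ F(u)` for all `u ∈ ℓ¹` with `∑_k |u_k − x*_k| < ε`,
then `x*` is sparse: `{k : x*_k ≠ 0}` is finite. -/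
theorem stmt_19
    {Y : Type*} [NormedAddCommGroup Y] [InnerProductSpace ℝ Y] [CompleteSpace Y]
    (A : lp (fun _ : ℕ => ℝ) 2 →L[ℝ] Y) (y : Y) (α : ℝ) (hα : 0 < α)
    (p : ℕ → ℝ) (hp0 : ∀ k, 0 < p k) (hp1 : ∀ k, p k < 1)
    (hinf : 0 < ⨅ k, p k)
    (xstar : lp (fun _ : ℕ => ℝ) 2)
    (hx1 : Summable fun k => |xstar k|)
    (hxp : Summable fun k => |xstar k| ^ p k)
    (ε : ℝ) (hε : 0 < ε)
    (hmin : ∀ u : lp (fun _ : ℕ => ℝ) 2, (Summable fun k => |u k|) →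
      (∑' k, |u k - xstar k|) < ε →
      ENNReal.ofReal ((1 / 2) * ‖A xstar - y‖ ^ 2) +
          ENNReal.ofReal α * ∑' k, ENNReal.ofReal (|xstar k| ^ p k) ≤
        ENNReal.ofReal ((1 / 2) * ‖A u - y‖ ^ 2) +
          ENNReal.ofReal α * ∑' k, ENNReal.ofReal (|u k| ^ p k)) :
    {k : ℕ | xstar k ≠ 0}.Finite := by
  by_contra hfin
  replace hfin : {k : ℕ | xstar k ≠ 0}.Infinite := hfin
  set w := (ContinuousLinearMap.adjoint A) (A xstar - y) with hw
  -- coordinates of w tend to 0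
  have hws : Summable fun k => ‖w k‖ ^ (2:ENNReal).toReal :=
    (lp.memℓp w).summable (by norm_num)
  have hwt : Tendsto (fun k => |w k|) atTop (𝓝 0) := by
    have h1 : Tendsto (fun k => ‖w k‖ ^ (2:ENNReal).toReal) atTop (𝓝 0) :=
      hws.tendsto_atTop_zero
    have h2 : Tendsto (fun k => Real.sqrt (‖w k‖ ^ (2:ENNReal).toReal)) atTop (𝓝 (Real.sqrt 0)) :=
      (Real.continuous_sqrt.tendsto 0).comp h1
    have : (fun k => Real.sqrt (‖w k‖ ^ (2:ENNReal).toReal)) = fun k => |w k| := by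
      funext k
      have : (2:ENNReal).toReal = (2:ℝ) := by norm_num
      rw [this, Real.rpow_two, Real.sqrt_sq_eq_abs, abs_norm, Real.norm_eq_abs]
    rwa [this, Real.sqrt_zero] at h2
  have hxt : Tendsto (fun k => |xstar k|) atTop (𝓝 0) := hx1.tendsto_atTop_zero
  -- choose a large k in the support
  set δ : ℝ := min ε (min 1 (α / (‖A‖ ^ 2 + 1))) with hδ
  have hδpos : 0 < δ := by
    have hA : (0:ℝ) < ‖A‖ ^ 2 + 1 := by positivity
    exact lt_min hε (lt_min one_pos (by positivity))
  have hev1 : ∀ᶠ k in atTop, |xstar k| < δ := hxt.eventually_lt_const hδpos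
  have hev2 : ∀ᶠ k in atTop, |w k| < α / 2 := hwt.eventually_lt_const (by linarith)
  obtain ⟨N, hN⟩ := (hev1.and hev2).exists_forall_of_atTop
  obtain ⟨k, hk, hkN⟩ := hfin.exists_gt N
  have hk0 : xstar k ≠ 0 := hk
  obtain ⟨hkδ, hkw⟩ := hN k hkN.le
  set a : ℝ := xstar k with ha
  have hapos : 0 < |a| := abs_pos.mpr hk0
  have haε : |a| < ε := lt_of_lt_of_le hkδ (min_le_left _ _)
  have ha1 : |a| ≤ 1 := le_of_lt (lt_of_lt_of_le hkδ ((min_le_right _ _).trans (min_le_left _ _)))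
  have haA : |a| < α / (‖A‖ ^ 2 + 1) :=
    lt_of_lt_of_le hkδ ((min_le_right _ _).trans (min_le_right _ _))
  -- the competitor u
  set v : lp (fun _ : ℕ => ℝ) 2 := lp.single 2 k a with hv
  set u : lp (fun _ : ℕ => ℝ) 2 := xstar - v with hu
  have hvj : ∀ j, v j = if j = k then a else 0 := by
    intro j
    by_cases h : j = k
    · subst h; simp [hv, lp.single_apply_self]
    · simp [hv, lp.single_apply_ne 2 k _ h, h]
  have huj : ∀ j, u j = xstar j - v j := fun j => rfl
  have huk : u k = 0 := by rw [huj, hvj]; simp [ha]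
  have hujne : ∀ j, j ≠ k → u j = xstar j := by
    intro j hj; rw [huj, hvj]; simp [hj]
  -- summability of |u|
  have hvsum : Summable fun j => |v j| := by
    apply summable_of_ne_finset_zero (s := {k})
    intro j hj
    simp only [Finset.mem_singleton] at hj
    rw [hvj]; simp [hj]
  have hu1 : Summable fun j => |u j| := by
    refine Summable.of_nonneg_of_le (fun j => abs_nonneg _)
      (fun j => ?_) (hx1.add hvsum)
    rw [huj]
    exact (abs_sub _ _).trans_eq rfl
  -- distance
  have hdist : (∑' j, |u j - xstar j|) = |a| := by
    rw [tsum_eq_single k]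
    · rw [huk]; simp [ha]
    · intro j hj; rw [hujne j hj]; simp
  -- penalty sums
  have hup_le : ∀ j, |u j| ^ p j ≤ |xstar j| ^ p j := by
    intro j
    by_cases h : j = k
    · subst h
      rw [huk, abs_zero, Real.zero_rpow (hp0 j).ne']
      positivity
    · rw [hujne j h]
  have hupen : Summable fun j => |u j| ^ p j :=
    Summable.of_nonneg_of_le (fun j => by positivity) hup_le hxp
  set T : ℝ := ∑' j, |u j| ^ p j with hT
  set c : ℝ := |a| ^ p k with hc
  have hcpos : 0 < c := Real.rpow_pos_of_pos hapos _
  have hsplit : (fun j => |xstar j| ^ p j) =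
      fun j => |u j| ^ p j + (if j = k then c else 0) := by
    funext j
    by_cases h : j = k
    · subst h
      rw [huk, abs_zero, Real.zero_rpow (hp0 j).ne']
      simp [hc, ha]
    · rw [hujne j h]; simp [h]
  have hitesum : Summable fun j : ℕ => (if j = k then c else 0) := by
    apply summable_of_ne_finset_zero (s := {k})
    intro j hj
    simp only [Finset.mem_singleton] at hj
    simp [hj]
  have hite : (∑' j : ℕ, (if j = k then c else 0)) = c := by
    rw [tsum_eq_single k (fun j hj => by simp [hj])]
    simp
  have hS : (∑' j, |xstar j| ^ p j) = T + c := by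
    rw [hsplit, Summable.tsum_add hupen hitesum, hite]
  -- apply minimality and convert to reals
  have hmain := hmin u hu1 (by rw [hdist]; exact haε)
  rw [← ENNReal.ofReal_tsum_of_nonneg (fun j => Real.rpow_nonneg (abs_nonneg _) _) hxp,
      ← ENNReal.ofReal_tsum_of_nonneg (fun j => Real.rpow_nonneg (abs_nonneg _) _) hupen,
      ← ENNReal.ofReal_mul hα.le, ← ENNReal.ofReal_mul hα.le,
      ← ENNReal.ofReal_add (by positivity)
        (mul_nonneg hα.le (tsum_nonneg fun j => Real.rpow_nonneg (abs_nonneg _) _)),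
      ← ENNReal.ofReal_add (by positivity)
        (mul_nonneg hα.le (tsum_nonneg fun j => Real.rpow_nonneg (abs_nonneg _) _))] at hmain
  have hreal : (1/2) * ‖A xstar - y‖ ^ 2 + α * (∑' j, |xstar j| ^ p j) ≤
      (1/2) * ‖A u - y‖ ^ 2 + α * T := by
    have hTnn : 0 ≤ T := tsum_nonneg (fun j => by positivity)
    exact (ENNReal.ofReal_le_ofReal_iff (by positivity)).mp hmain
  rw [hS] at hreal
  have hkey : α * c ≤ (1/2) * ‖A u - y‖ ^ 2 - (1/2) * ‖A xstar - y‖ ^ 2 := by linarith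
  -- expand the quadratic term
  have hAu : A u - y = (A xstar - y) - A v := by
    rw [hu, map_sub]; abel
  have hinnerv : (inner ℝ (A xstar - y) (A v) : ℝ) = w k * a := by
    rw [← ContinuousLinearMap.adjoint_inner_left, ← hw, hv, lp.inner_single_right]
    simp [RCLike.inner_apply, mul_comm]
  have hnormv : ‖v‖ = |a| := by
    have := lp.norm_single (p := 2) (E := fun _ : ℕ => ℝ) (by norm_num)
      k a
    rw [hv]
    simpa using this
  have hAv : ‖A v‖ ≤ ‖A‖ * |a| := by
    calc ‖A v‖ ≤ ‖A‖ * ‖v‖ := A.le_opNorm v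
    _ = ‖A‖ * |a| := by rw [hnormv]
  have hexp : ‖A u - y‖ ^ 2 = ‖A xstar - y‖ ^ 2 - 2 * (w k * a) + ‖A v‖ ^ 2 := by
    rw [hAu, norm_sub_sq_real, hinnerv]
  have hAv2 : ‖A v‖ ^ 2 ≤ ‖A‖ ^ 2 * |a| ^ 2 := by
    have h0 : 0 ≤ ‖A v‖ := norm_nonneg _
    nlinarith [norm_nonneg A, abs_nonneg a]
  -- combine
  have hwa : -(w k * a) ≤ |w k| * |a| := by
    calc -(w k * a) ≤ |w k * a| := neg_le_abs _
    _ = |w k| * |a| := abs_mul _ _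
  have hfinal : α * c ≤ |w k| * |a| + (1/2) * (‖A‖ ^ 2 * |a| ^ 2) := by
    rw [hexp] at hkey
    nlinarith
  have hcge : |a| ≤ c := by
    have := Real.rpow_le_rpow_of_exponent_ge hapos ha1 (hp1 k).le
    rwa [Real.rpow_one] at this
  -- derive contradiction
  have hAbound : (1/2) * (‖A‖ ^ 2 * |a|) < α / 2 := by
    have h1 : (0:ℝ) < ‖A‖ ^ 2 + 1 := by positivity
    have h2 : ‖A‖ ^ 2 * |a| < ‖A‖ ^ 2 * (α / (‖A‖ ^ 2 + 1)) + α / (‖A‖ ^ 2 + 1) := by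
      nlinarith [sq_nonneg ‖A‖, hapos]
    have h3 : ‖A‖ ^ 2 * (α / (‖A‖ ^ 2 + 1)) + α / (‖A‖ ^ 2 + 1) = α := by
      field_simp
    nlinarith
  have : α * |a| ≤ |a| * (|w k| + (1/2) * (‖A‖ ^ 2 * |a|)) := by
    calc α * |a| ≤ α * c := by nlinarith
    _ ≤ |w k| * |a| + (1/2) * (‖A‖ ^ 2 * |a| ^ 2) := hfinal
    _ = |a| * (|w k| + (1/2) * (‖A‖ ^ 2 * |a|)) := by ring
  have hcontra : α ≤ |w k| + (1/2) * (‖A‖ ^ 2 * |a|) :=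
    le_of_mul_le_mul_right (by linarith [this]) hapos
  linarith
end
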